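/- arXiv:1708.03127 — 6 statements merged into one kernel-verified Lean document; each statement's English description precedes it below -/
import Mathlib

section
/- Let f : X → L̄⁰ be proper convex and σ_s-lower semi-continuous, and let F : L⁰(X) → L̄⁰ be its canonical extension, F(x) = sup_{V ∈ 𝒱(x)} inf { f_s(x̃) : x̃ ∈ V ∩ L⁰ₛ(X) } (a.e.-least-upper-bound sense). Then F is maximal among all extensions: for every G : L⁰(X) → L̄⁰ which is stable, L⁰-proper convex, σ_s-lower semi-continuous and satisfies G(x·1_Ω) = f(x) a.e. for every x ∈ X, one has G(x) ≤ F(x) a.e. for every x ∈ L⁰(X). -/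
open MeasureTheory Filter Set Function Topology

noncomputable section

section Defs

variable {Ω : Type*} [MeasurableSpace Ω] {X : Type*}

/-- `x : Ω → X` is a step function (countably-valued strongly measurable function),
i.e. it agrees `μ`-a.e. with `Σₖ xₖ 1_{Aₖ}` for a sequence `(xₖ)` in `X` and a countable
measurable partition `(Aₖ)` of `Ω`. -/
def IsStep (μ : Measure Ω) (x : Ω → X) : Prop :=
  ∃ (xs : ℕ → X) (A : ℕ → Set Ω), (∀ k, MeasurableSet (A k)) ∧
    Pairwise (Disjoint on A) ∧ (⋃ k, A k) = Set.univ ∧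
    ∀ᵐ ω ∂μ, ∀ k, ω ∈ A k → x ω = xs k

/-- `xt` is a step function and `g` is a version of its image `f_s(xt)` under the extension
of `f : X → L̄⁰` to step functions. -/
def StepPair (μ : Measure Ω) (f : X → Ω → EReal) (xt : Ω → X) (g : Ω → EReal) : Prop :=
  ∃ (xs : ℕ → X) (A : ℕ → Set Ω), (∀ k, MeasurableSet (A k)) ∧
    Pairwise (Disjoint on A) ∧ (⋃ k, A k) = Set.univ ∧
    ∀ᵐ ω ∂μ, ∀ k, ω ∈ A k → xt ω = xs k ∧ g ω = f (xs k) ω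

/-- `s` is a/the a.e. least upper bound (essential supremum) of the family `g`. -/
def IsAESup (μ : Measure Ω) {ι : Sort*} (g : ι → Ω → EReal) (s : Ω → EReal) : Prop :=
  Measurable s ∧ (∀ i, ∀ᵐ ω ∂μ, g i ω ≤ s ω) ∧
    ∀ h : Ω → EReal, Measurable h → (∀ i, ∀ᵐ ω ∂μ, g i ω ≤ h ω) → ∀ᵐ ω ∂μ, s ω ≤ h ω

/-- `s` is a/the a.e. greatest lower bound (essential infimum) of the family `g`. -/
def IsAEInf (μ : Measure Ω) {ι : Sort*} (g : ι → Ω → EReal) (s : Ω → EReal) : Prop :=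
  Measurable s ∧ (∀ i, ∀ᵐ ω ∂μ, s ω ≤ g i ω) ∧
    ∀ h : Ω → EReal, Measurable h → (∀ i, ∀ᵐ ω ∂μ, h ω ≤ g i ω) → ∀ᵐ ω ∂μ, h ω ≤ s ω

end Defs

/-- The weak topology `σ(X,Y)` on `X` induced by a bilinear pairing `B : X × Y → ℝ`,
i.e. the coarsest topology making all maps `x ↦ B x y`, `y ∈ Y`, continuous. -/
def weakTopol {X Y : Type*} [AddCommGroup X] [Module ℝ X] [AddCommGroup Y] [Module ℝ Y]
    (B : X →ₗ[ℝ] Y →ₗ[ℝ] ℝ) : TopologicalSpace X :=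
  TopologicalSpace.induced (fun x (y : Y) => B x y) Pi.topologicalSpace

section Nbhd

variable {Ω : Type*} [MeasurableSpace Ω]

/-- The parameters `(r, n, (yₘ))` of a basic stable neighborhood
`V(x; r, n, (yₘ))` in `L⁰(X)`. -/
structure NbhdParam (μ : Measure Ω) (Y : Type*) [NormedAddCommGroup Y] where
  r : Ω → ℝ
  r_meas : Measurable r
  r_pos : ∀ ω, 0 < r ω
  n : Ω → ℕ
  n_meas : Measurable n
  ys : ℕ → Ω → Y
  ys_meas : ∀ m, AEStronglyMeasurable (ys m) μ

end Nbhd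

section Stable

variable {Ω : Type*} [MeasurableSpace Ω]
variable {X Y : Type*} [NormedAddCommGroup X] [NormedSpace ℝ X]
  [NormedAddCommGroup Y] [NormedSpace ℝ Y]

/-- `xt` belongs to the basic stable neighborhood `V(x; r, n, (yₘ))` of `x`:
for `μ`-a.e. `ω`, `|⟨xt(ω) - x(ω), yₘ(ω)⟩| ≤ r(ω)` for all `1 ≤ m ≤ n(ω)`. -/
def NbhdParam.Mem (B : X →ₗ[ℝ] Y →ₗ[ℝ] ℝ) {μ : Measure Ω} (V : NbhdParam μ Y)
    (x xt : Ω → X) : Prop :=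
  ∀ᵐ ω ∂μ, ∀ m : ℕ, 1 ≤ m → m ≤ V.n ω → |B (xt ω - x ω) (V.ys m ω)| ≤ V.r ω

/-- σ_s-lower semi-continuity of `f : X → L̄⁰`:
`f(x) = sup_{V ∈ 𝒱(x)} inf { f_s(xt) : xt ∈ V ∩ L⁰ₛ(X) }` for every `x ∈ X`. -/
def SigmaSLsc (μ : Measure Ω) (B : X →ₗ[ℝ] Y →ₗ[ℝ] ℝ) (f : X → Ω → EReal) : Prop :=
  ∀ x : X, ∃ I : NbhdParam μ Y → Ω → EReal,
    (∀ V : NbhdParam μ Y,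
      IsAEInf μ (fun p : {p : (Ω → X) × (Ω → EReal) //
        StepPair μ f p.1 p.2 ∧ V.Mem B (fun _ => x) p.1} => p.1.2) (I V)) ∧
    IsAESup μ I (f x)

/-- σ_s-lower semi-continuity of `F : L⁰(X) → L̄⁰`:
`F(x) = sup_{V ∈ 𝒱(x)} inf { F(z) : z ∈ V }` for every `x ∈ L⁰(X)`. -/
def SigmaSLscL0 (μ : Measure Ω) (B : X →ₗ[ℝ] Y →ₗ[ℝ] ℝ)
    (F : (Ω → X) → Ω → EReal) : Prop :=
  ∀ x : Ω → X, AEStronglyMeasurable x μ → ∃ I : NbhdParam μ Y → Ω → EReal,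
    (∀ V : NbhdParam μ Y,
      IsAEInf μ
        (fun z : {z : Ω → X // AEStronglyMeasurable z μ ∧ V.Mem B x z} => F z.1) (I V)) ∧
    IsAESup μ I (F x)

/-- `F` satisfies the canonical-extension formula
`F(x) = sup_{V ∈ 𝒱(x)} inf { f_s(xt) : xt ∈ V ∩ L⁰ₛ(X) }` for every `x ∈ L⁰(X)`. -/
def IsCanonicalExt (μ : Measure Ω) (B : X →ₗ[ℝ] Y →ₗ[ℝ] ℝ)
    (f : X → Ω → EReal) (F : (Ω → X) → Ω → EReal) : Prop :=
  ∀ x : Ω → X, AEStronglyMeasurable x μ → ∃ I : NbhdParam μ Y → Ω → EReal,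
    (∀ V : NbhdParam μ Y,
      IsAEInf μ (fun p : {p : (Ω → X) × (Ω → EReal) //
        StepPair μ f p.1 p.2 ∧ V.Mem B x p.1} => p.1.2) (I V)) ∧
    IsAESup μ I (F x)

/-- Stability of `F : L⁰(X) → L̄⁰` under countable concatenations:
`F(Σₖ xₖ 1_{Aₖ}) = Σₖ F(xₖ) 1_{Aₖ}` a.e. -/
def StableFun (μ : Measure Ω) (F : (Ω → X) → Ω → EReal) : Prop :=
  ∀ (xs : ℕ → Ω → X) (A : ℕ → Set Ω) (x : Ω → X),
    (∀ k, AEStronglyMeasurable (xs k) μ) → (∀ k, MeasurableSet (A k)) →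
    Pairwise (Disjoint on A) → (⋃ k, A k) = Set.univ →
    (∀ᵐ ω ∂μ, ∀ k, ω ∈ A k → x ω = xs k ω) →
    ∀ᵐ ω ∂μ, ∀ k, ω ∈ A k → F x ω = F (xs k) ω

/-- `f : X → L̄⁰` is proper convex. -/
def ProperConvex (μ : Measure Ω) (f : X → Ω → EReal) : Prop :=
  (∀ x : X, ∀ᵐ ω ∂μ, f x ω ≠ ⊥) ∧
  (∃ x' : X, ∀ᵐ ω ∂μ, f x' ω ≠ ⊥ ∧ f x' ω ≠ ⊤) ∧
  ∀ (x xt : X) (l : ℝ), 0 ≤ l → l ≤ 1 →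
    ∀ᵐ ω ∂μ, f (l • x + (1 - l) • xt) ω ≤
      (l : EReal) * f x ω + ((1 - l : ℝ) : EReal) * f xt ω

/-- `F : L⁰(X) → L̄⁰` is L⁰-proper convex. -/
def L0ProperConvex (μ : Measure Ω) (F : (Ω → X) → Ω → EReal) : Prop :=
  (∀ x : Ω → X, AEStronglyMeasurable x μ → ∀ᵐ ω ∂μ, F x ω ≠ ⊥) ∧
  (∃ x' : Ω → X, AEStronglyMeasurable x' μ ∧ ∀ᵐ ω ∂μ, F x' ω ≠ ⊥ ∧ F x' ω ≠ ⊤) ∧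
  ∀ (x z : Ω → X) (l : Ω → ℝ), AEStronglyMeasurable x μ → AEStronglyMeasurable z μ →
    Measurable l → (∀ ω, 0 ≤ l ω ∧ l ω ≤ 1) →
    ∀ᵐ ω ∂μ, F (fun ω' => l ω' • x ω' + (1 - l ω') • z ω') ω ≤
      (l ω : EReal) * F x ω + ((1 - l ω : ℝ) : EReal) * F z ω

/-- `U ⊆ L⁰(X)` is open in the stable topology `σ_s(L⁰(X), L⁰(Y))`: for every `x ∈ U`
there is a basic stable neighborhood `V ∈ 𝒱(x)` with `V ⊆ U`. -/
def SigmaSOpen (μ : Measure Ω) (B : X →ₗ[ℝ] Y →ₗ[ℝ] ℝ)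
    (U : Set {x : Ω → X // AEStronglyMeasurable x μ}) : Prop :=
  ∀ x ∈ U, ∃ V : NbhdParam μ Y,
    ∀ z : {x : Ω → X // AEStronglyMeasurable x μ}, V.Mem B x.1 z.1 → z ∈ U

end Stable

/-- **Maximality of the canonical extension.** If `f : X → L̄⁰` is proper convex and
σ_s-lower semi-continuous and `F` is its canonical extension to `L⁰(X)`, then
`G ≤ F` for every stable, `L⁰`-proper convex, σ_s-lower semi-continuous extension
`G` of `f`. -/
theorem canonical_extension_maximal
    {Ω : Type*} [MeasurableSpace Ω] (μ : Measure Ω) [SigmaFinite μ]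
    {X Y : Type*} [NormedAddCommGroup X] [NormedSpace ℝ X] [CompleteSpace X]
    [NormedAddCommGroup Y] [NormedSpace ℝ Y] [CompleteSpace Y]
    (B : X →ₗ[ℝ] Y →ₗ[ℝ] ℝ)
    (hB : ∀ (x : X) (y : Y), |B x y| ≤ ‖x‖ * ‖y‖)
    (hsepX : ∀ x : X, x ≠ 0 → ∃ y : Y, B x y ≠ 0)
    (hsepY : ∀ y : Y, y ≠ 0 → ∃ x : X, B x y ≠ 0)
    (hballX : @IsClosed X (weakTopol B) {x : X | ‖x‖ ≤ 1})
    (hballY : @IsClosed Y (weakTopol B.flip) {y : Y | ‖y‖ ≤ 1})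
    (f : X → Ω → EReal) (hf : ∀ x : X, Measurable (f x))
    (hpc : ProperConvex μ f) (hlsc : SigmaSLsc μ B f)
    (F : (Ω → X) → Ω → EReal) (hF : IsCanonicalExt μ B f F)
    (G : (Ω → X) → Ω → EReal)
    (hGstable : StableFun μ G) (hGpc : L0ProperConvex μ G)
    (hGlsc : SigmaSLscL0 μ B G)
    (hGext : ∀ x : X, G (fun _ => x) =ᵐ[μ] f x) :
    ∀ x : Ω → X, AEStronglyMeasurable x μ → ∀ᵐ ω ∂μ, G x ω ≤ F x ω := by
  classical
  intro x hx
  obtain ⟨IG, hIG_inf, hIG_sup⟩ := hGlsc x hx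
  obtain ⟨IF, hIF_inf, hIF_sup⟩ := hF x hx
  apply hIG_sup.2.2 (F x) hIF_sup.1
  intro V
  have h1 : ∀ᵐ ω ∂μ, IG V ω ≤ IF V ω := by
    apply (hIF_inf V).2.2 (IG V) (hIG_inf V).1
    rintro ⟨⟨xt, g⟩, ⟨xs, A, hAmeas, hAdisj, hAuniv, hae⟩, hmem⟩
    -- a selector for the partition
    have hex : ∀ ω, ∃ k, ω ∈ A k := fun ω => by
      have : ω ∈ ⋃ k, A k := hAuniv ▸ Set.mem_univ ω
      exact Set.mem_iUnion.mp this
    set k0 : Ω → ℕ := fun ω => Nat.find (hex ω) with hk0def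
    have hk0mem : ∀ ω, ω ∈ A (k0 ω) := fun ω => Nat.find_spec (hex ω)
    have hk0pre : ∀ n : ℕ, k0 ⁻¹' {n} = A n ∩ ⋂ m < n, (A m)ᶜ := by
      intro n
      ext ω
      simp only [Set.mem_preimage, Set.mem_singleton_iff, Set.mem_inter_iff,
        Set.mem_iInter, Set.mem_compl_iff, hk0def]
      constructor
      · rintro rfl
        exact ⟨Nat.find_spec (hex ω), fun m hm => Nat.find_min (hex ω) hm⟩
      · rintro ⟨h1, h2⟩
        exact le_antisymm (Nat.find_min' (hex ω) h1)
          (by by_contra h; push_neg at h; exact h2 _ h (Nat.find_spec (hex ω)))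
    have hk0meas : Measurable k0 := by
      apply measurable_to_nat
      intro ω
      rw [hk0pre]
      exact (hAmeas _).inter (MeasurableSet.iInter fun m =>
        MeasurableSet.iInter fun _ => (hAmeas m).compl)
    -- the canonical step function version of xt
    have hsm : StronglyMeasurable (fun ω => xs (k0 ω)) := by
      let mn : ℕ → SimpleFunc Ω ℕ := fun n =>
        { toFun := fun ω => min (k0 ω) n
          measurableSet_fiber' := fun m =>
            (hk0meas.min measurable_const) (measurableSet_singleton m)
          finite_range' := (Set.finite_Iic n).subset
            (Set.range_subset_iff.2 fun _ => Set.mem_Iic.2 (min_le_right _ _)) }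
      refine ⟨fun n => (mn n).map xs, fun ω => ?_⟩
      refine Tendsto.congr' ?_ (tendsto_const_nhds :
        Tendsto (fun _ : ℕ => xs (k0 ω)) atTop (nhds (xs (k0 ω))))
      filter_upwards [eventually_ge_atTop (k0 ω)] with n hn
      show xs (k0 ω) = xs (min (k0 ω) n)
      rw [min_eq_left hn]
    have hxt_eq : xt =ᵐ[μ] fun ω => xs (k0 ω) := by
      filter_upwards [hae] with ω h using (h _ (hk0mem ω)).1
    have hxt_sm : AEStronglyMeasurable xt μ :=
      hsm.aestronglyMeasurable.congr hxt_eq.symm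
    -- IG V ≤ G xt a.e.
    have hle : ∀ᵐ ω ∂μ, IG V ω ≤ G xt ω := (hIG_inf V).2.1 ⟨xt, hxt_sm, hmem⟩
    -- G xt = g a.e. via stability and extension property
    have hstab := hGstable (fun k _ => xs k) A xt (fun _ => aestronglyMeasurable_const)
      hAmeas hAdisj hAuniv (by filter_upwards [hae] with ω h k hk using (h k hk).1)
    have hext : ∀ᵐ ω ∂μ, ∀ k, G (fun _ => xs k) ω = f (xs k) ω :=
      MeasureTheory.ae_all_iff.mpr fun k => hGext (xs k)
    filter_upwards [hle, hstab, hext, hae] with ω h1 h2 h3 h4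
    have : G xt ω = g ω := by
      rw [h2 _ (hk0mem ω), h3, (h4 _ (hk0mem ω)).2]
    exact this ▸ h1
  have h2 : ∀ᵐ ω ∂μ, IF V ω ≤ F x ω := hIF_sup.2.1 V
  filter_upwards [h1, h2] with ω a b using a.trans b
end
end

section
/- Equip L⁰(X) with the topology σ_s in which a set U ⊆ L⁰(X) is open if and only if for every x ∈ U there exists V ∈ 𝒱(x) with V ⊆ U (the sets 𝒱(x) form a neighborhood base of this topology). For a function f : X → L̄⁰ the following are equivalent: (ii) f(x) = sup_{V ∈ 𝒱(x)} inf { f_s(x̃) : x̃ ∈ V ∩ L⁰ₛ(X) } for every x ∈ X; (iii) for every measurable a : Ω → [−∞,∞], the sublevel set { x ∈ L⁰ₛ(X) : f_s(x) ≤ a a.e. } is closed in L⁰ₛ(X) with the topology induced from σ_s. -/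
open MeasureTheory Filter Set Function Topology

noncomputable section

set_option linter.unusedSectionVars false
set_option maxHeartbeats 1000000

open scoped Classical ENNReal NNReal

section Helpers

variable {Ω : Type*} [MeasurableSpace Ω]

def pidx (A : ℕ → Set Ω) (hc : (⋃ k, A k) = Set.univ) (ω : Ω) : ℕ :=
  Nat.find (show ∃ k, ω ∈ A k from Set.mem_iUnion.mp (hc ▸ Set.mem_univ ω))

lemma pidx_spec (A : ℕ → Set Ω) (hc : (⋃ k, A k) = Set.univ) (ω : Ω) :
    ω ∈ A (pidx A hc ω) :=
  Nat.find_spec (show ∃ k, ω ∈ A k from Set.mem_iUnion.mp (hc ▸ Set.mem_univ ω))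

lemma pidx_eq {A : ℕ → Set Ω} (hc : (⋃ k, A k) = Set.univ)
    (hd : Pairwise (Disjoint on A)) {ω : Ω} {k : ℕ} (h : ω ∈ A k) :
    pidx A hc ω = k := by
  by_contra hne
  exact Set.disjoint_left.mp (hd hne) (pidx_spec A hc ω) h

lemma measurable_pidx {A : ℕ → Set Ω} (hA : ∀ k, MeasurableSet (A k))
    (hc : (⋃ k, A k) = Set.univ) (hd : Pairwise (Disjoint on A)) :
    Measurable (pidx A hc) := by
  apply measurable_to_countable'
  intro k
  have : pidx A hc ⁻¹' {k} = A k := by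
    ext ω
    simp only [Set.mem_preimage, Set.mem_singleton_iff]
    constructor
    · rintro rfl; exact pidx_spec A hc ω
    · exact pidx_eq hc hd
  rw [this]; exact hA k

lemma measurable_glue {β : Type*} [MeasurableSpace β] {h : ℕ → Ω → β}
    (hh : ∀ k, Measurable (h k)) {idx : Ω → ℕ} (hidx : Measurable idx) :
    Measurable fun ω => h (idx ω) ω := by
  have : (fun ω => h (idx ω) ω)
      = (fun p : Ω × ℕ => h p.2 p.1) ∘ (fun ω => (ω, idx ω)) := rfl
  rw [this]
  exact (measurable_from_prod_countable_left fun n => hh n).comp (measurable_id.prodMk hidx)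

lemma stronglyMeasurable_glue {X : Type*} [NormedAddCommGroup X] (xs : ℕ → X)
    {idx : Ω → ℕ} (hidx : Measurable idx) :
    StronglyMeasurable fun ω => xs (idx ω) := by
  refine ⟨fun N => ⟨fun ω => xs (min (idx ω) N), fun v => ?_, ?_⟩, fun ω => ?_⟩
  · exact hidx (show MeasurableSet ((fun k => xs (min k N)) ⁻¹' {v}) from trivial)
  · refine ((Set.finite_Iic N).image (fun k => xs k)).subset ?_
    rintro _ ⟨ω, rfl⟩
    exact ⟨min (idx ω) N, Set.mem_Iic.mpr (min_le_right _ _), rfl⟩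
  · refine tendsto_atTop_of_eventually_const (i₀ := idx ω) fun N hN => ?_
    show xs (min (idx ω) N) = xs (idx ω)
    rw [min_eq_left hN]

end Helpers

section StepLemmas

variable {Ω : Type*} [MeasurableSpace Ω] {X : Type*} {μ : Measure Ω}
  {f : X → Ω → EReal} {x xt : Ω → X} {g g' : Ω → EReal}

lemma trivialPartition :
    (∀ k : ℕ, MeasurableSet (if k = 0 then (Set.univ : Set Ω) else ∅)) ∧
      Pairwise (Disjoint on fun k : ℕ => if k = 0 then (Set.univ : Set Ω) else ∅) ∧
      (⋃ k : ℕ, if k = 0 then (Set.univ : Set Ω) else ∅) = Set.univ := by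
  refine ⟨fun k => by split <;> simp, fun i j hij => ?_, ?_⟩
  · simp only [onFun]
    rcases eq_or_ne i 0 with rfl | hi
    · rw [if_neg (Ne.symm hij)]; exact disjoint_bot_right
    · rw [if_neg hi]; exact disjoint_bot_left
  · apply Set.eq_univ_of_univ_subset
    intro ω _
    exact Set.mem_iUnion.mpr ⟨0, by simp⟩

lemma stepPair_const (c : X) : StepPair μ f (fun _ => c) (f c) := by
  obtain ⟨h1, h2, h3⟩ := trivialPartition (Ω := Ω)
  exact ⟨fun _ => c, _, h1, h2, h3, Filter.Eventually.of_forall fun ω k _ => ⟨rfl, rfl⟩⟩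

lemma isStep_const (c : X) : IsStep μ (fun _ => c) := by
  obtain ⟨h1, h2, h3⟩ := trivialPartition (Ω := Ω)
  exact ⟨fun _ => c, _, h1, h2, h3, Filter.Eventually.of_forall fun ω k _ => rfl⟩

lemma StepPair.isStep (h : StepPair μ f xt g) : IsStep μ xt := by
  obtain ⟨xs, A, hA, hd, hc, hae⟩ := h
  exact ⟨xs, A, hA, hd, hc, hae.mono fun ω h k hk => (h k hk).1⟩

lemma StepPair.congr_g (h : StepPair μ f xt g) (hg : g =ᵐ[μ] g') : StepPair μ f xt g' := by
  obtain ⟨xs, A, hA, hd, hc, hae⟩ := h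
  refine ⟨xs, A, hA, hd, hc, ?_⟩
  filter_upwards [hae, hg] with ω h1 h2 k hk
  exact ⟨(h1 k hk).1, h2 ▸ (h1 k hk).2⟩

lemma StepPair.unique (h1 : StepPair μ f xt g) (h2 : StepPair μ f xt g') : g =ᵐ[μ] g' := by
  obtain ⟨xs, A, hA, hd, hc, hae⟩ := h1
  obtain ⟨xs', A', hA', hd', hc', hae'⟩ := h2
  filter_upwards [hae, hae'] with ω e1 e2
  have m1 := pidx_spec A hc ω
  have m2 := pidx_spec A' hc' ω
  obtain ⟨v1, w1⟩ := e1 _ m1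
  obtain ⟨v2, w2⟩ := e2 _ m2
  rw [w1, w2, show xs (pidx A hc ω) = xs' (pidx A' hc' ω) from v1 ▸ v2]

lemma IsStep.exists_measurable_stepPair (hx : IsStep μ x) (hf : ∀ c, Measurable (f c)) :
    ∃ g : Ω → EReal, Measurable g ∧ StepPair μ f x g := by
  obtain ⟨xs, A, hA, hd, hc, hae⟩ := hx
  refine ⟨fun ω => f (xs (pidx A hc ω)) ω,
    measurable_glue (fun k => hf (xs k)) (measurable_pidx hA hc hd), xs, A, hA, hd, hc, ?_⟩
  filter_upwards [hae] with ω h1 k hk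
  exact ⟨h1 k hk, by rw [pidx_eq hc hd hk]⟩

lemma StepPair.exists_measurable_version (h : StepPair μ f xt g)
    (hf : ∀ c, Measurable (f c)) :
    ∃ gm : Ω → EReal, Measurable gm ∧ gm =ᵐ[μ] g ∧ StepPair μ f xt gm := by
  obtain ⟨gm, hm, hsp⟩ := h.isStep.exists_measurable_stepPair hf
  exact ⟨gm, hm, hsp.unique h, hsp⟩

lemma IsStep.aestronglyMeasurable [NormedAddCommGroup X] (hx : IsStep μ x) :
    AEStronglyMeasurable x μ := by
  obtain ⟨xs, A, hA, hd, hc, hae⟩ := hx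
  refine ⟨fun ω => xs (pidx A hc ω),
    stronglyMeasurable_glue xs (measurable_pidx hA hc hd), ?_⟩
  filter_upwards [hae] with ω h1
  exact h1 _ (pidx_spec A hc ω)

lemma stepPair_glue {F : ℕ → Set Ω} (hF : ∀ j, MeasurableSet (F j))
    (hFd : Pairwise (Disjoint on F)) (hFc : (⋃ j, F j) = Set.univ)
    {z : ℕ → Ω → X} {g : ℕ → Ω → EReal} (hzg : ∀ j, StepPair μ f (z j) (g j))
    {zz : Ω → X} {gg : Ω → EReal}
    (hglue : ∀ᵐ ω ∂μ, ∀ j, ω ∈ F j → zz ω = z j ω ∧ gg ω = g j ω) :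
    StepPair μ f zz gg := by
  choose xs A hA hd hc hae using hzg
  let d : ℕ ≃ ℕ × ℕ := (Denumerable.eqv (ℕ × ℕ)).symm
  refine ⟨fun m => xs (d m).1 (d m).2, fun m => F (d m).1 ∩ A (d m).1 (d m).2,
    fun m => (hF _).inter (hA _ _), ?_, ?_, ?_⟩
  · intro m m' hmm
    have : d m ≠ d m' := fun h => hmm (d.injective h)
    rcases eq_or_ne (d m).1 (d m').1 with h1 | h1
    · have h2 : (d m).2 ≠ (d m').2 := fun h2 => this (Prod.ext h1 h2)
      exact Set.disjoint_left.mpr fun ω h h' =>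
        Set.disjoint_left.mp (hd (d m).1 h2) h.2 (h1 ▸ h'.2)
    · exact Set.disjoint_left.mpr fun ω h h' =>
        Set.disjoint_left.mp (hFd h1) h.1 h'.1
  · apply Set.eq_univ_of_univ_subset
    intro ω _
    obtain ⟨j, hj⟩ := Set.mem_iUnion.mp (hFc ▸ Set.mem_univ ω)
    obtain ⟨k, hk⟩ := Set.mem_iUnion.mp ((hc j) ▸ Set.mem_univ ω)
    exact Set.mem_iUnion.mpr ⟨d.symm (j, k), by simp [d.apply_symm_apply]; exact ⟨hj, hk⟩⟩
  · have hall : ∀ᵐ ω ∂μ, ∀ j k, ω ∈ A j k → z j ω = xs j k ∧ g j ω = f (xs j k) ω :=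
      MeasureTheory.ae_all_iff.mpr hae
    filter_upwards [hglue, hall] with ω h1 h2 m hm
    obtain ⟨hmF, hmA⟩ := hm
    obtain ⟨e1, e2⟩ := h1 _ hmF
    obtain ⟨e3, e4⟩ := h2 _ _ hmA
    exact ⟨e1.trans e3, e2.trans e4⟩

end StepLemmas

section PhiE

def eRf (t : EReal) : ℝ :=
  if t = ⊥ then 0 else if t = ⊤ then 4 else Real.arctan t.toReal + 2

lemma arctan_abs_lt_two (x : ℝ) : |Real.arctan x| < 2 := by
  rw [abs_lt]
  constructor
  · nlinarith [Real.neg_pi_div_two_lt_arctan x, Real.pi_lt_d2]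
  · nlinarith [Real.arctan_lt_pi_div_two x, Real.pi_lt_d2]

lemma eRf_nonneg (t : EReal) : 0 ≤ eRf t := by
  unfold eRf
  split
  · exact le_refl _
  split
  · norm_num
  · nlinarith [abs_lt.mp (arctan_abs_lt_two t.toReal)]

lemma eRf_le_four (t : EReal) : eRf t ≤ 4 := by
  unfold eRf
  split
  · norm_num
  split
  · exact le_refl _
  · nlinarith [abs_lt.mp (arctan_abs_lt_two t.toReal)]

lemma eRf_pos {t : EReal} (ht : t ≠ ⊥) : 0 < eRf t := by
  unfold eRf
  rw [if_neg ht]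
  split
  · norm_num
  · nlinarith [abs_lt.mp (arctan_abs_lt_two t.toReal)]

lemma eRf_strictMono : StrictMono eRf := by
  intro s t hst
  induction s using EReal.rec with
  | bot =>
    have ht : t ≠ ⊥ := hst.ne'
    have : eRf ⊥ = 0 := by simp [eRf]
    rw [this]; exact eRf_pos ht
  | top => exact absurd hst (by simp)
  | coe a =>
    induction t using EReal.rec with
    | bot => exact absurd hst (by simp)
    | top =>
      have h1 : eRf ((a : ℝ) : EReal) = Real.arctan a + 2 := by simp [eRf]
      have h2 : eRf ⊤ = 4 := by simp [eRf]
      rw [h1, h2]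
      nlinarith [abs_lt.mp (arctan_abs_lt_two a)]
    | coe b =>
      have h1 : eRf ((a : ℝ) : EReal) = Real.arctan a + 2 := by simp [eRf]
      have h2 : eRf ((b : ℝ) : EReal) = Real.arctan b + 2 := by simp [eRf]
      rw [h1, h2]
      have : a < b := EReal.coe_lt_coe_iff.mp hst
      have := Real.arctan_strictMono this
      linarith

def phiE (t : EReal) : ℝ≥0∞ := ENNReal.ofReal (eRf t)

lemma phiE_strictMono : StrictMono phiE := by
  intro s t hst
  have h2 := eRf_strictMono hst
  have hpos : 0 < eRf t := lt_of_le_of_lt (eRf_nonneg s) h2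
  exact (ENNReal.ofReal_lt_ofReal_iff hpos).mpr h2

lemma phiE_measurable : Measurable phiE :=
  ENNReal.measurable_ofReal.comp eRf_strictMono.monotone.measurable

lemma phiE_le_four (t : EReal) : phiE t ≤ 4 := by
  calc phiE t ≤ ENNReal.ofReal 4 := ENNReal.ofReal_le_ofReal (eRf_le_four t)
  _ = 4 := by norm_num

end PhiE

lemma ae_eq_of_lintegral_le {Ω : Type*} [MeasurableSpace Ω] {μ : Measure Ω} {f g : Ω → ℝ≥0∞}
    (hf : Measurable f) (hg : Measurable g) (hle : f ≤ g) (hfin : ∫⁻ ω, g ω ∂μ ≠ ⊤)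
    (heq : ∫⁻ ω, g ω ∂μ ≤ ∫⁻ ω, f ω ∂μ) : f =ᵐ[μ] g := by
  have heq' : ∫⁻ ω, f ω ∂μ = ∫⁻ ω, g ω ∂μ :=
    le_antisymm (lintegral_mono hle) heq
  have hsub : ∫⁻ ω, (g ω - f ω) ∂μ = ∫⁻ ω, g ω ∂μ - ∫⁻ ω, f ω ∂μ :=
    lintegral_sub hf (by rw [← heq'] at hfin; exact hfin) (Filter.Eventually.of_forall hle)
  rw [← heq', tsub_self] at hsub
  have := (lintegral_eq_zero_iff (hg.sub hf)).mp hsub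
  filter_upwards [this] with ω h
  exact le_antisymm (hle ω) (tsub_eq_zero_iff_le.mp h)

lemma exists_ae_iInf_le {Ω : Type*} [MeasurableSpace Ω] (μ : Measure Ω) [SigmaFinite μ]
    {ι : Type*} [Nonempty ι] (g : ι → Ω → EReal) (hg : ∀ i, Measurable (g i)) :
    ∃ s : ℕ → ι, ∀ i, ∀ᵐ ω ∂μ, (⨅ n, g (s n) ω) ≤ g i ω := by
  obtain ⟨ν, hfin, hμν, hνμ⟩ := exists_isFiniteMeasure_absolutelyContinuous μ
  set J : (ℕ → ι) → ℝ≥0∞ := fun s => ∫⁻ ω, phiE (⨅ n, g (s n) ω) ∂ν with hJ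
  set c : ℝ≥0∞ := ⨅ s, J s with hc
  have hJle : ∀ s, J s ≤ 4 * ν Set.univ := by
    intro s
    calc J s ≤ ∫⁻ _, 4 ∂ν := lintegral_mono fun ω => phiE_le_four _
    _ = 4 * ν Set.univ := by rw [lintegral_const]
  have hc_ne_top : c ≠ ⊤ := by
    have : c ≤ 4 * ν Set.univ := le_trans (iInf_le _ (fun _ => Classical.arbitrary ι)) (hJle _)
    exact ne_top_of_le_ne_top (by finiteness) this
  have hsk : ∀ k : ℕ, ∃ s, J s < c + ((k : ℝ≥0∞) + 1)⁻¹ := by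
    intro k
    have h1 : c < c + ((k : ℝ≥0∞) + 1)⁻¹ :=
      ENNReal.lt_add_right hc_ne_top (by simp)
    exact iInf_lt_iff.mp h1
  choose sk hsklt using hsk
  set s : ℕ → ι := fun n => sk (Nat.unpair n).1 (Nat.unpair n).2 with hs
  set I : Ω → EReal := fun ω => ⨅ n, g (s n) ω with hI
  have hImeas : Measurable I := Measurable.iInf fun n => hg (s n)
  have hIle : ∀ k m, I ≤ fun ω => g (sk k m) ω := by
    intro k m ω
    simpa [hs, Nat.unpair_pair] using iInf_le (fun n => g (s n) ω) (Nat.pair k m)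
  have hJI_le : J s ≤ c := by
    have h4 : ∀ k : ℕ, J s ≤ c + ((k : ℝ≥0∞) + 1)⁻¹ := by
      intro k
      refine le_trans ?_ (hsklt k).le
      refine lintegral_mono fun ω => phiE_strictMono.monotone ?_
      exact le_iInf fun m => hIle k m ω
    refine ENNReal.le_of_forall_pos_le_add fun ε hε _ => ?_
    obtain ⟨n, hn⟩ := ENNReal.exists_inv_nat_lt (show (ε : ℝ≥0∞) ≠ 0 by simpa using hε.ne')
    refine le_trans (h4 n) (add_le_add_right ?_ c)
    refine le_trans ?_ hn.le
    exact ENNReal.inv_le_inv.mpr (by norm_num)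
  refine ⟨s, fun i => ?_⟩
  set t : ℕ → ι := fun n => Nat.rec i (fun m _ => s m) n with ht
  have hmin : ∀ ω, (⨅ n, g (t n) ω) = min (g i ω) (I ω) := by
    intro ω
    apply le_antisymm
    · exact le_min (iInf_le _ 0) (le_iInf fun m => iInf_le (fun n => g (t n) ω) (m + 1))
    · refine le_iInf fun n => ?_
      cases n with
      | zero => exact min_le_left _ _
      | succ m => exact (min_le_right _ _).trans (iInf_le (fun n => g (s n) ω) m)
  have hJt : c ≤ J t := iInf_le _ t
  have hmeasmin : Measurable fun ω => min (g i ω) (I ω) := (hg i).min hImeas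
  have hF : (fun ω => phiE (min (g i ω) (I ω))) =ᵐ[ν] fun ω => phiE (I ω) := by
    refine ae_eq_of_lintegral_le (phiE_measurable.comp hmeasmin) (phiE_measurable.comp hImeas)
      (fun ω => phiE_strictMono.monotone (min_le_right _ _)) ?_ ?_
    · exact ne_top_of_le_ne_top (by finiteness)
        (le_trans (lintegral_mono fun ω => phiE_le_four _) (le_of_eq (lintegral_const 4)))
    · calc ∫⁻ ω, phiE (I ω) ∂ν = J s := rfl
      _ ≤ c := hJI_le
      _ ≤ J t := hJt
      _ = ∫⁻ ω, phiE (min (g i ω) (I ω)) ∂ν := lintegral_congr fun ω => by rw [hmin ω]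
  have hae : ∀ᵐ ω ∂ν, I ω ≤ g i ω := by
    filter_upwards [hF] with ω h
    have := phiE_strictMono.injective h
    exact min_eq_right_iff.mp this
  exact hμν.ae_le hae

section NbhdLemmas

variable {Ω : Type*} [MeasurableSpace Ω]
variable {X Y : Type*} [NormedAddCommGroup X] [NormedSpace ℝ X]
  [NormedAddCommGroup Y] [NormedSpace ℝ Y]

lemma NbhdParam.mem_refl (B : X →ₗ[ℝ] Y →ₗ[ℝ] ℝ) {μ : Measure Ω} (V : NbhdParam μ Y)
    (x : Ω → X) : V.Mem B x x :=
  Filter.Eventually.of_forall fun ω m _ _ => by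
    rw [sub_self, map_zero, LinearMap.zero_apply, abs_zero]
    exact (V.r_pos ω).le

end NbhdLemmas

/-- **Proposition 2.4, (ii) ⟺ (iii).** For `f : X → L̄⁰`, the sup-inf formula
`f(x) = sup_{V ∈ 𝒱(x)} inf { f_s(xt) : xt ∈ V ∩ L⁰ₛ(X) }` for every `x ∈ X` holds
if and only if for every measurable `a : Ω → [-∞,∞]` the sublevel set
`{ x ∈ L⁰ₛ(X) : f_s(x) ≤ a a.e. }` is closed in `L⁰ₛ(X)` with the topology induced
from the stable topology σ_s (i.e. its relative complement is the trace of a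
σ_s-open set). -/
theorem sigmaS_lsc_iff_sublevels_closed
    {Ω : Type*} [MeasurableSpace Ω] (μ : Measure Ω) [SigmaFinite μ]
    {X Y : Type*} [NormedAddCommGroup X] [NormedSpace ℝ X] [CompleteSpace X]
    [NormedAddCommGroup Y] [NormedSpace ℝ Y] [CompleteSpace Y]
    (B : X →ₗ[ℝ] Y →ₗ[ℝ] ℝ)
    (hB : ∀ (x : X) (y : Y), |B x y| ≤ ‖x‖ * ‖y‖)
    (hsepX : ∀ x : X, x ≠ 0 → ∃ y : Y, B x y ≠ 0)
    (hsepY : ∀ y : Y, y ≠ 0 → ∃ x : X, B x y ≠ 0)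
    (hballX : @IsClosed X (weakTopol B) {x : X | ‖x‖ ≤ 1})
    (hballY : @IsClosed Y (weakTopol B.flip) {y : Y | ‖y‖ ≤ 1})
    (f : X → Ω → EReal) (hf : ∀ x : X, Measurable (f x)) :
    SigmaSLsc μ B f ↔
      ∀ a : Ω → EReal, Measurable a →
        ∃ U : Set {x : Ω → X // AEStronglyMeasurable x μ},
          SigmaSOpen μ B U ∧
          ∀ x : {x : Ω → X // AEStronglyMeasurable x μ}, IsStep μ x.1 →
            (x ∈ U ↔ ¬ ∃ g : Ω → EReal, StepPair μ f x.1 g ∧ g ≤ᵐ[μ] a) := by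
  constructor
  · -- (ii) → (iii)
    intro hlsc a hameas
    refine ⟨{z | ∃ W : NbhdParam μ Y, ∀ xt g, StepPair μ f xt g → W.Mem B z.1 xt →
      ¬ (g ≤ᵐ[μ] a)}, ?_, ?_⟩
    · -- openness
      rintro z ⟨W, hW⟩
      refine ⟨⟨fun ω => W.r ω / 2, W.r_meas.div_const 2, fun ω => half_pos (W.r_pos ω),
        W.n, W.n_meas, W.ys, W.ys_meas⟩, ?_⟩
      rintro w hw
      refine ⟨⟨fun ω => W.r ω / 2, W.r_meas.div_const 2, fun ω => half_pos (W.r_pos ω),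
        W.n, W.n_meas, W.ys, W.ys_meas⟩, fun xt g hsp hmem => hW xt g hsp ?_⟩
      filter_upwards [hw, hmem] with ω h1 h2 m hm1 hm2
      have e : B (xt ω - z.1 ω) (W.ys m ω)
          = B (xt ω - w.1 ω) (W.ys m ω) + B (w.1 ω - z.1 ω) (W.ys m ω) := by
        rw [← LinearMap.add_apply, ← map_add, sub_add_sub_cancel]
      rw [e]
      calc |B (xt ω - w.1 ω) (W.ys m ω) + B (w.1 ω - z.1 ω) (W.ys m ω)|
          ≤ |B (xt ω - w.1 ω) (W.ys m ω)| + |B (w.1 ω - z.1 ω) (W.ys m ω)| := abs_add_le _ _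
        _ ≤ W.r ω / 2 + W.r ω / 2 := add_le_add (h2 m hm1 hm2) (h1 m hm1 hm2)
        _ = W.r ω := by ring
    · -- trace on step functions
      intro x hxstep
      constructor
      · rintro ⟨W, hW⟩ ⟨g, hsp, hle⟩
        exact hW x.1 g hsp (NbhdParam.mem_refl B W x.1) hle
      · intro hnex
        obtain ⟨xs, A, hA, hd, hc, haex⟩ := hxstep
        set gh : Ω → EReal := fun ω => f (xs (pidx A hc ω)) ω with hgh
        have hghmeas : Measurable gh :=
          measurable_glue (fun k => hf (xs k)) (measurable_pidx hA hc hd)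
        have hspgh : StepPair μ f x.1 gh := by
          refine ⟨xs, A, hA, hd, hc, ?_⟩
          filter_upwards [haex] with ω h k hk
          exact ⟨h k hk, by show f (xs (pidx A hc ω)) ω = f (xs k) ω; rw [pidx_eq hc hd hk]⟩
        have hna : ¬ (gh ≤ᵐ[μ] a) := fun h => hnex ⟨gh, hspgh, h⟩
        set P := {ω | a ω < gh ω} with hP
        have hPpos : μ P ≠ 0 := by
          intro h0
          refine hna ?_
          rw [EventuallyLE, ae_iff]
          refine measure_mono_null (fun ω hω => ?_) h0
          exact not_le.mp hω
        have hk0 : ∃ k0, μ (A k0 ∩ P) ≠ 0 := by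
          by_contra hall
          push_neg at hall
          refine hPpos (measure_mono_null (fun ω hω => ?_) (measure_iUnion_null hall))
          obtain ⟨k, hk⟩ := Set.mem_iUnion.mp (hc ▸ Set.mem_univ ω)
          exact Set.mem_iUnion.mpr ⟨k, hk, hω⟩
        obtain ⟨k0, hk0⟩ := hk0
        obtain ⟨I, hinf, hsup⟩ := hlsc (xs k0)
        set S := A k0 ∩ P with hS
        have hSmeas : MeasurableSet S := (hA k0).inter (measurableSet_lt hameas hghmeas)
        set h : Ω → EReal := fun ω => if ω ∈ S then a ω else ⊤ with hh
        have hhmeas : Measurable h := Measurable.ite hSmeas hameas measurable_const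
        have hVex : ∃ V, ¬ (∀ᵐ ω ∂μ, I V ω ≤ h ω) := by
          by_contra hallV
          push_neg at hallV
          have hfle := hsup.2.2 h hhmeas hallV
          have hsub : S ⊆ {ω | ¬ (f (xs k0) ω ≤ h ω)} := by
            rintro ω ⟨hωA, hωP⟩
            have h3 : gh ω = f (xs k0) ω := by show f (xs (pidx A hc ω)) ω = f (xs k0) ω; rw [pidx_eq hc hd hωA]
            have h1 : h ω = a ω := if_pos ⟨hωA, hωP⟩
            simp only [Set.mem_setOf_eq, not_le, h1, ← h3]
            exact hωP
          exact hk0 (measure_mono_null hsub (ae_iff.mp hfle))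
        obtain ⟨V, hV⟩ := hVex
        have hIVmeas := (hinf V).1
        set C := {ω | h ω < I V ω} with hC
        have hCmeas : MeasurableSet C := measurableSet_lt hhmeas hIVmeas
        have hCpos : μ C ≠ 0 := by
          intro h0
          refine hV ?_
          rw [ae_iff]
          refine measure_mono_null (fun ω hω => not_le.mp hω) h0
        have hCS : C ⊆ S := by
          intro ω hω
          by_contra hn
          have : h ω = ⊤ := if_neg hn
          have hlt : h ω < I V ω := hω
          rw [this] at hlt
          exact not_top_lt hlt
        refine ⟨⟨V.r, V.r_meas, V.r_pos, fun ω => if ω ∈ C then V.n ω else 0,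
          Measurable.ite hCmeas V.n_meas measurable_const, V.ys, V.ys_meas⟩, ?_⟩
        rintro xt g hsp hmem hga
        set z' : Ω → X := fun ω => if ω ∈ C then xt ω else xs k0 with hz'
        set g' : Ω → EReal := fun ω => if ω ∈ C then g ω else f (xs k0) ω with hg'
        have hFmeas : ∀ j : ℕ, MeasurableSet (if j = 0 then Cᶜ else if j = 1 then C else (∅ : Set Ω)) := by
          intro j
          match j with
          | 0 => simpa using hCmeas.compl
          | 1 => simpa using hCmeas
          | (n+2) => simp
        have hzsp : ∀ j : ℕ, StepPair μ f (if j = 1 then xt else fun _ => xs k0)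
            (if j = 1 then g else f (xs k0)) := by
          intro j
          by_cases hj : j = 1
          · rw [if_pos hj, if_pos hj]; exact hsp
          · rw [if_neg hj, if_neg hj]; exact stepPair_const (xs k0)
        have hsp' : StepPair μ f z' g' := by
          refine stepPair_glue (F := fun j => if j = 0 then Cᶜ else if j = 1 then C else ∅)
            (z := fun j => if j = 1 then xt else fun _ => xs k0)
            (g := fun j => if j = 1 then g else f (xs k0))
            hFmeas ?_ ?_ hzsp ?_
          · intro i j hij
            simp only [onFun]
            rcases i with _ | _ | i <;> rcases j with _ | _ | j <;>
              simp_all [disjoint_compl_left, disjoint_compl_right]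
          · apply Set.eq_univ_of_univ_subset
            intro ω _
            by_cases hωC : ω ∈ C
            · exact Set.mem_iUnion.mpr ⟨1, by simpa using hωC⟩
            · exact Set.mem_iUnion.mpr ⟨0, by simpa using hωC⟩
          · refine Filter.Eventually.of_forall fun ω j hj => ?_
            rcases j with _ | _ | n
            · have hωC : ω ∉ C := by simpa using hj
              simp only [hz', hg']
              rw [if_neg hωC, if_neg hωC]
              exact ⟨by norm_num, by norm_num⟩
            · have hωC : ω ∈ C := by simpa using hj
              simp only [hz', hg']
              rw [if_pos hωC, if_pos hωC]
              exact ⟨by norm_num, by norm_num⟩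
            · simp at hj
        have hmem' : V.Mem B (fun _ => xs k0) z' := by
          filter_upwards [hmem, haex] with ω h1 h2 m hm1 hm2
          by_cases hωC : ω ∈ C
          · have hzz : z' ω = xt ω := if_pos hωC
            have hx : x.1 ω = xs k0 := h2 k0 (hCS hωC).1
            rw [hzz, ← hx]
            exact h1 m hm1 (by rw [if_pos hωC]; exact hm2)
          · have hzz : z' ω = xs k0 := if_neg hωC
            rw [hzz, sub_self, map_zero, LinearMap.zero_apply, abs_zero]
            exact (V.r_pos ω).le
        have hIle := (hinf V).2.1 ⟨(z', g'), hsp', hmem'⟩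
        have hfin : ∀ᵐ ω ∂μ, ω ∉ C := by
          filter_upwards [hIle, hga] with ω h1 h2 hωC
          have hC1 : h ω < I V ω := hωC
          have hg'ω : g' ω = g ω := if_pos hωC
          have hhω : h ω = a ω := if_pos (hCS hωC)
          rw [hhω] at hC1
          have : I V ω ≤ a ω := le_trans (hg'ω ▸ h1) h2
          exact absurd (lt_of_lt_of_le hC1 this) (lt_irrefl _)
        refine hCpos ?_
        have := ae_iff.mp hfin
        simpa using this
  · -- (iii) → (ii)
    intro hclosed x
    have hne : ∀ V : NbhdParam μ Y, Nonempty {p : (Ω → X) × (Ω → EReal) //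
        StepPair μ f p.1 p.2 ∧ V.Mem B (fun _ => x) p.1} :=
      fun V => ⟨⟨(fun _ => x, f x), stepPair_const x, NbhdParam.mem_refl B V _⟩⟩
    have hgm : ∀ (V : NbhdParam μ Y) (p : {p : (Ω → X) × (Ω → EReal) //
        StepPair μ f p.1 p.2 ∧ V.Mem B (fun _ => x) p.1}),
        ∃ gm : Ω → EReal, Measurable gm ∧ gm =ᵐ[μ] p.1.2 ∧ StepPair μ f p.1.1 gm :=
      fun V p => p.2.1.exists_measurable_version hf
    choose gm hgm_meas hgm_ae hgm_sp using hgm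
    have hs : ∀ V : NbhdParam μ Y, ∃ s : ℕ → {p : (Ω → X) × (Ω → EReal) //
        StepPair μ f p.1 p.2 ∧ V.Mem B (fun _ => x) p.1},
        ∀ p, ∀ᵐ ω ∂μ, (⨅ n, gm V (s n) ω) ≤ gm V p ω := by
      intro V
      haveI := hne V
      exact exists_ae_iInf_le μ (gm V) (hgm_meas V)
    choose sq hsq using hs
    refine ⟨fun V ω => ⨅ n, gm V (sq V n) ω,
      fun V => ⟨Measurable.iInf fun n => hgm_meas V _, ?_, ?_⟩, hf x, ?_, ?_⟩
    · intro p
      filter_upwards [hsq V p, hgm_ae V p] with ω h1 h2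
      exact h2 ▸ h1
    · intro h hmeas hle
      have hallq : ∀ n, ∀ᵐ ω ∂μ, h ω ≤ gm V (sq V n) ω := by
        intro n
        filter_upwards [hle (sq V n), hgm_ae V (sq V n)] with ω h1 h2
        rw [h2]
        exact h1
      filter_upwards [ae_all_iff.mpr hallq] with ω h1
      exact le_iInf h1
    · intro V
      have hp0 := hsq V ⟨(fun _ => x, f x), stepPair_const x, NbhdParam.mem_refl B V _⟩
      filter_upwards [hp0, hgm_ae V ⟨(fun _ => x, f x), stepPair_const x,
        NbhdParam.mem_refl B V _⟩] with ω h1 h2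
      exact le_trans h1 (le_of_eq h2)
    · -- maximality via closedness of sublevel sets
      intro h hmeas hall
      by_contra hcon
      have hpos : μ {ω | h ω < f x ω} ≠ 0 := by
        intro h0
        exact hcon (ae_iff.mpr (measure_mono_null (fun ω hω => not_le.mp hω) h0))
      have hqsub : {ω | h ω < f x ω} ⊆
          ⋃ q : ℚ, {ω | h ω < ((q:ℝ):EReal)} ∩ {ω | ((q:ℝ):EReal) < f x ω} := by
        intro ω hω
        obtain ⟨q, hq1, hq2⟩ := EReal.exists_rat_btwn_of_lt hω
        exact Set.mem_iUnion.mpr ⟨q, hq1, hq2⟩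
      have hq0 : ∃ q0 : ℚ, μ ({ω | h ω < ((q0:ℝ):EReal)} ∩ {ω | ((q0:ℝ):EReal) < f x ω}) ≠ 0 := by
        by_contra hq
        push_neg at hq
        exact hpos (measure_mono_null hqsub (measure_iUnion_null hq))
      obtain ⟨q0, hq0⟩ := hq0
      set D := {ω | h ω < ((q0:ℝ):EReal)} ∩ {ω | ((q0:ℝ):EReal) < f x ω} with hD
      have hDmeas : MeasurableSet D :=
        (measurableSet_lt hmeas measurable_const).inter (measurableSet_lt measurable_const (hf x))
      set a : Ω → EReal := fun ω => if ω ∈ D then ((q0:ℝ):EReal) else ⊤ with ha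
      have hameas : Measurable a := Measurable.ite hDmeas measurable_const measurable_const
      obtain ⟨U, hUopen, hUtrace⟩ := hclosed a hameas
      have hxmem : (⟨fun _ => x, aestronglyMeasurable_const⟩ :
          {x : Ω → X // AEStronglyMeasurable x μ}) ∈ U := by
        rw [hUtrace _ (isStep_const x)]
        rintro ⟨g, hsp, hga⟩
        have hgfx : g =ᵐ[μ] f x := hsp.unique (stepPair_const x)
        have hfinD : ∀ᵐ ω ∂μ, ω ∉ D := by
          filter_upwards [hga, hgfx] with ω h1 h2 hωD
          have haω : a ω = ((q0:ℝ):EReal) := if_pos hωD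
          rw [h2, haω] at h1
          exact absurd (lt_of_le_of_lt h1 hωD.2) (lt_irrefl _)
        refine hq0 ?_
        have := ae_iff.mp hfinD
        simpa using this
      obtain ⟨V, hV⟩ := hUopen _ hxmem
      have hIVh := hall V
      set N := {ω | ¬ (⨅ n, gm V (sq V n) ω) ≤ h ω} with hN
      have hNnull : μ N = 0 := ae_iff.mp hIVh
      have hNmeas : MeasurableSet N := by
        have : N = {ω | h ω < ⨅ n, gm V (sq V n) ω} := by
          ext ω; simp [hN, not_le]
        rw [this]
        exact measurableSet_lt hmeas (Measurable.iInf fun n => hgm_meas V _)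
      set G : ℕ → Set Ω := fun n => {ω | gm V (sq V n) ω < ((q0:ℝ):EReal)} with hG
      have hGmeas : ∀ n, MeasurableSet (G n) :=
        fun n => measurableSet_lt (hgm_meas V _) measurable_const
      set E : ℕ → Set Ω := fun n => ((D \ N) ∩ G n) \ ⋃ j ∈ Finset.range n, G j with hE
      have hEmeas : ∀ n, MeasurableSet (E n) := fun n =>
        (((hDmeas.diff hNmeas).inter (hGmeas n)).diff
          (Finset.measurableSet_biUnion _ fun j _ => hGmeas j))
      have hEdisj : Pairwise (Disjoint on E) := by
        intro i j hij
        rcases lt_or_gt_of_ne hij with hlt | hlt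
        · exact Set.disjoint_left.mpr fun ω hi hj =>
            hj.2 (Set.mem_biUnion (Finset.mem_range.mpr hlt) hi.1.2)
        · exact Set.disjoint_left.mpr fun ω hi hj =>
            hi.2 (Set.mem_biUnion (Finset.mem_range.mpr hlt) hj.1.2)
      have hDNE : D \ N ⊆ ⋃ n, E n := by
        intro ω hω
        have h1 : (⨅ n, gm V (sq V n) ω) ≤ h ω := not_not.mp hω.2
        have h2 : h ω < ((q0:ℝ):EReal) := hω.1.1
        have h3 : (⨅ n, gm V (sq V n) ω) < ((q0:ℝ):EReal) := lt_of_le_of_lt h1 h2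
        have hex : ∃ n, ω ∈ G n := iInf_lt_iff.mp h3
        refine Set.mem_iUnion.mpr ⟨Nat.find hex, ⟨hω, Nat.find_spec hex⟩, ?_⟩
        intro hmem
        obtain ⟨j, hj3, hj4⟩ := Set.mem_iUnion₂.mp hmem
        exact Nat.find_min hex (Finset.mem_range.mp hj3) hj4
      -- the partition: F 0 = (⋃ E)ᶜ, F (n+1) = E n
      set F : ℕ → Set Ω := fun j => Nat.casesOn j (⋃ n, E n)ᶜ E with hF
      have hFmeas : ∀ j, MeasurableSet (F j) := by
        intro j
        rcases j with _ | n
        · exact (MeasurableSet.iUnion hEmeas).compl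
        · exact hEmeas n
      have hFdisj : Pairwise (Disjoint on F) := by
        intro i j hij
        rcases i with _ | i <;> rcases j with _ | j
        · exact absurd rfl hij
        · exact Set.disjoint_left.mpr fun ω hi hj =>
            hi (Set.mem_iUnion.mpr ⟨j, hj⟩)
        · exact Set.disjoint_left.mpr fun ω hi hj =>
            hj (Set.mem_iUnion.mpr ⟨i, hi⟩)
        · exact hEdisj (fun hc => hij (by rw [hc]))
      have hFcov : (⋃ j, F j) = Set.univ := by
        apply Set.eq_univ_of_univ_subset
        intro ω _
        by_cases hω : ω ∈ ⋃ n, E n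
        · obtain ⟨n, hn⟩ := Set.mem_iUnion.mp hω
          exact Set.mem_iUnion.mpr ⟨n + 1, hn⟩
        · exact Set.mem_iUnion.mpr ⟨0, hω⟩
      -- the glued step function
      set Z : ℕ → Ω → X := fun j => Nat.casesOn j (fun _ => x) (fun n => (sq V n).1.1) with hZ
      set Gg : ℕ → Ω → EReal := fun j => Nat.casesOn j (f x) (fun n => gm V (sq V n)) with hGg
      have hZsp : ∀ j, StepPair μ f (Z j) (Gg j) := by
        intro j
        rcases j with _ | n
        · exact stepPair_const x
        · exact hgm_sp V (sq V n)
      set zz : Ω → X := fun ω => Z (pidx F hFcov ω) ω with hzz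
      set gg : Ω → EReal := fun ω => Gg (pidx F hFcov ω) ω with hgg
      have hspzz : StepPair μ f zz gg := by
        refine stepPair_glue hFmeas hFdisj hFcov hZsp
          (Filter.Eventually.of_forall fun ω j hj => ?_)
        have hp : pidx F hFcov ω = j := pidx_eq hFcov hFdisj hj
        constructor
        · show Z (pidx F hFcov ω) ω = Z j ω
          rw [hp]
        · show Gg (pidx F hFcov ω) ω = Gg j ω
          rw [hp]
      have hmemzz : V.Mem B (fun _ => x) zz := by
        have hallmem : ∀ᵐ ω ∂μ, ∀ n, ∀ m : ℕ, 1 ≤ m → m ≤ V.n ω →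
            |B ((sq V n).1.1 ω - x) (V.ys m ω)| ≤ V.r ω :=
          ae_all_iff.mpr fun n => (sq V n).2.2
        filter_upwards [hallmem] with ω h1 m hm1 hm2
        rcases hcase : pidx F hFcov ω with _ | n
        · have : zz ω = x := by show Z (pidx F hFcov ω) ω = x; rw [hcase]; rfl
          rw [this, sub_self, map_zero, LinearMap.zero_apply, abs_zero]
          exact (V.r_pos ω).le
        · have : zz ω = (sq V n).1.1 ω := by show Z (pidx F hFcov ω) ω = _; rw [hcase]
          rw [this]
          exact h1 n m hm1 hm2
      have hggle : gg ≤ᵐ[μ] a := by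
        have hNae : ∀ᵐ ω ∂μ, ω ∉ N := by
          rw [ae_iff]
          simpa using hNnull
        filter_upwards [hNae] with ω hωN
        rcases hcase : pidx F hFcov ω with _ | n
        · have hωF : ω ∈ F 0 := hcase ▸ pidx_spec F hFcov ω
          have hωD : ω ∉ D := by
            intro hωD
            exact hωF (hDNE ⟨hωD, hωN⟩)
          have : a ω = ⊤ := if_neg hωD
          rw [this]
          exact le_top
        · have hωF : ω ∈ F (n + 1) := hcase ▸ pidx_spec F hFcov ω
          have hωE : ω ∈ E n := hωF
          have hωD : ω ∈ D := hωE.1.1.1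
          have hωG : ω ∈ G n := hωE.1.2
          have h1 : gg ω = gm V (sq V n) ω := by show Gg (pidx F hFcov ω) ω = _; rw [hcase]
          have h2 : a ω = ((q0:ℝ):EReal) := if_pos hωD
          rw [h1, h2]
          exact le_of_lt hωG
      have hzzU : (⟨zz, hspzz.isStep.aestronglyMeasurable⟩ :
          {x : Ω → X // AEStronglyMeasurable x μ}) ∈ U :=
        hV ⟨zz, hspzz.isStep.aestronglyMeasurable⟩ hmemzz
      rw [hUtrace _ hspzz.isStep] at hzzU
      exact hzzU ⟨gg, hspzz, hggle⟩
end
end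

section
/- For every x ∈ L⁰(X) with x(ω) ≠ 0 for μ-a.e. ω, there exists y ∈ L⁰(Y) such that ⟨x(ω), y(ω)⟩ ≠ 0 for μ-a.e. ω. Symmetrically, for every y ∈ L⁰(Y) with y(ω) ≠ 0 for μ-a.e. ω, there exists x ∈ L⁰(X) such that ⟨x(ω), y(ω)⟩ ≠ 0 for μ-a.e. ω. -/
open MeasureTheory Filter Set Function Topology

noncomputable section

section SepAux

variable {Ω : Type*} [MeasurableSpace Ω]

/-- Composition of an arbitrary function on `ℕ` with a measurable `ℕ`-valued function is
strongly measurable. -/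
lemma stronglyMeasurable_comp_nat {Y : Type*} [TopologicalSpace Y]
    (ys : ℕ → Y) {k : Ω → ℕ} (hk : Measurable k) :
    StronglyMeasurable (fun ω => ys (k ω)) := by
  refine ⟨fun n => ?simp, ?tend⟩
  case simp =>
    exact
      { toFun := fun ω => ys (min (k ω) n)
        measurableSet_fiber' := fun y => by
          have : (fun ω => ys (min (k ω) n)) ⁻¹' {y} =
              (fun ω => min (k ω) n) ⁻¹' (ys ⁻¹' {y}) := rfl
          rw [this]
          exact (hk.min measurable_const) ((ys ⁻¹' {y}).to_countable.measurableSet)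
        finite_range' := by
          have : Set.range (fun ω => ys (min (k ω) n)) ⊆ ys '' (Set.Iic n) := by
            rintro _ ⟨ω, rfl⟩
            exact ⟨min (k ω) n, Set.mem_Iic.2 (min_le_right _ _), rfl⟩
          exact ((Set.finite_Iic n).image ys).subset this }
  case tend =>
    intro ω
    refine Filter.Tendsto.congr' ?_ (tendsto_const_nhds (x := ys (k ω)))
    filter_upwards [Filter.eventually_ge_atTop (k ω)] with n hn
    show ys (k ω) = ys (min (k ω) n)
    rw [min_eq_left hn]

/-- Separation lemma for one direction. -/
lemma sep_aux (μ : Measure Ω) {X Y : Type*} [NormedAddCommGroup X] [NormedSpace ℝ X]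
    [NormedAddCommGroup Y] [NormedSpace ℝ Y]
    (C : X →ₗ[ℝ] Y →ₗ[ℝ] ℝ)
    (hC : ∀ (x : X) (y : Y), |C x y| ≤ ‖x‖ * ‖y‖)
    (hsep : ∀ x : X, x ≠ 0 → ∃ y : Y, C x y ≠ 0)
    (x : Ω → X) (hx : AEStronglyMeasurable x μ) (hx0 : ∀ᵐ ω ∂μ, x ω ≠ 0) :
    ∃ y : Ω → Y, AEStronglyMeasurable y μ ∧ ∀ᵐ ω ∂μ, C (x ω) (y ω) ≠ 0 := by
  classical
  obtain ⟨x', hx'sm, hxx'⟩ := hx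
  have hcont : ∀ y : Y, Continuous fun w : X => C w y := by
    intro y
    have := AddMonoidHomClass.continuous_of_bound (C.flip y) ‖y‖ fun w => by
      rw [mul_comm]; simpa [Real.norm_eq_abs] using hC w y
    exact this.congr fun w => by simp
  set S : Set X := Set.range x' \ {0} with hSdef
  by_cases hSne : S.Nonempty
  swap
  · -- a.e. ω leads to a contradiction, any y works
    refine ⟨0, aestronglyMeasurable_const, ?_⟩
    filter_upwards [hx0, hxx'] with ω h0 he
    exact absurd ⟨⟨ω, rfl⟩, by simp [← he, h0]⟩ (fun h => hSne ⟨x' ω, h⟩)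
  have hSsep : TopologicalSpace.IsSeparable S :=
    hx'sm.isSeparable_range.mono Set.diff_subset
  haveI : TopologicalSpace.SeparableSpace S := hSsep.separableSpace
  haveI : SecondCountableTopology S :=
    UniformSpace.secondCountable_of_separable S
  have hy : ∀ v : S, ∃ y : Y, C v y ≠ 0 := fun v => hsep v v.2.2
  choose yv hyv using hy
  obtain ⟨T, hTc, hTu⟩ := TopologicalSpace.isOpen_iUnion_countable
    (fun v : S => (Subtype.val ⁻¹' {w : X | C w (yv v) ≠ 0} : Set S))
    (fun v => (isOpen_compl_singleton.preimage (hcont (yv v))).preimage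
      continuous_subtype_val)
  have hTuniv : ⋃ v ∈ T, (Subtype.val ⁻¹' {w : X | C w (yv v) ≠ 0} : Set S) = Set.univ := by
    rw [hTu]
    ext v
    simp only [Set.mem_iUnion, Set.mem_univ, iff_true]
    exact ⟨v, hyv v⟩
  have hTne : T.Nonempty := by
    rcases Set.eq_empty_or_nonempty T with h | h
    · exfalso
      obtain ⟨v, hv⟩ := hSne
      have : (⟨v, hv⟩ : S) ∈ (⋃ u ∈ T, (Subtype.val ⁻¹' {w : X | C w (yv u) ≠ 0} : Set S)) := by
        rw [hTuniv]; trivial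
      simp [h] at this
    · exact h
  obtain ⟨e, he⟩ := hTc.exists_eq_range hTne
  set ys : ℕ → Y := fun j => yv (e j) with hys
  have hg : ∀ j, StronglyMeasurable fun ω => C (x' ω) (ys j) :=
    fun j => (hcont (ys j)).comp_stronglyMeasurable hx'sm
  set E : ℕ → Set Ω := fun j => {ω | C (x' ω) (ys j) ≠ 0} with hE
  have hEmeas : ∀ j, MeasurableSet (E j) := fun j =>
    (hg j).measurable (measurableSet_singleton (0 : ℝ)).compl
  -- key coverage fact
  have hcover : ∀ ω, x' ω ∈ S → ∃ j, C (x' ω) (ys j) ≠ 0 := by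
    intro ω hω
    have : (⟨x' ω, hω⟩ : S) ∈ ⋃ v ∈ T, (Subtype.val ⁻¹' {w : X | C w (yv v) ≠ 0} : Set S) := by
      rw [hTuniv]; trivial
    obtain ⟨v, hvT, hv⟩ := Set.mem_iUnion₂.1 this
    rw [he] at hvT
    obtain ⟨j, rfl⟩ := hvT
    exact ⟨j, hv⟩
  set k : Ω → ℕ := fun ω => if h : ∃ j, C (x' ω) (ys j) ≠ 0 then Nat.find h else 0 with hk
  have hkmeas : Measurable k := by
    apply measurable_to_countable'
    intro n
    have hset : k ⁻¹' {n} =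
        (E n ∩ ⋂ j ∈ Set.Iio n, (E j)ᶜ) ∪
          ((if n = 0 then Set.univ else ∅) ∩ ⋂ j, (E j)ᶜ) := by
      ext ω
      by_cases hex : ∃ j, C (x' ω) (ys j) ≠ 0
      · have hk' : k ω = Nat.find hex := dif_pos hex
        simp only [Set.mem_preimage, Set.mem_singleton_iff, hk', Set.mem_union,
          Set.mem_inter_iff, Set.mem_iInter, Set.mem_compl_iff, hE, Set.mem_setOf_eq,
          Set.mem_Iio, not_not]
        constructor
        · rintro rfl
          exact Or.inl ⟨Nat.find_spec hex, fun j hj => by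
            simpa using Nat.find_min hex hj⟩
        · rintro (⟨h1, h2⟩ | ⟨-, h3⟩)
          · exact (Nat.find_eq_iff hex).2 ⟨h1, fun j hj => by simpa using h2 j hj⟩
          · exact absurd hex (by push_neg; intro j; simpa using h3 j)
      · have hk' : k ω = 0 := dif_neg hex
        push_neg at hex
        simp only [Set.mem_preimage, Set.mem_singleton_iff, hk', Set.mem_union,
          Set.mem_inter_iff, Set.mem_iInter, Set.mem_compl_iff, hE, Set.mem_setOf_eq,
          Set.mem_Iio, not_not]
        constructor
        · rintro rfl
          refine Or.inr ⟨by simp, fun j => hex j⟩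
        · rintro (⟨h1, -⟩ | ⟨h2, -⟩)
          · exact absurd h1 (by simpa using hex n)
          · rcases eq_or_ne n 0 with h | h
            · exact h.symm
            · simp [h] at h2
    rw [hset]
    refine MeasurableSet.union
      ((hEmeas n).inter (MeasurableSet.biInter (Set.to_countable _)
        fun j _ => (hEmeas j).compl))
      (MeasurableSet.inter (by split <;> simp) (MeasurableSet.iInter fun j => (hEmeas j).compl))
  refine ⟨fun ω => ys (k ω), (stronglyMeasurable_comp_nat ys hkmeas).aestronglyMeasurable, ?_⟩
  filter_upwards [hx0, hxx'] with ω h0 he'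
  have hωS : x' ω ∈ S := ⟨⟨ω, rfl⟩, by simp [← he', h0]⟩
  have hex : ∃ j, C (x' ω) (ys j) ≠ 0 := hcover ω hωS
  have hk' : k ω = Nat.find hex := dif_pos hex
  have := Nat.find_spec hex
  rw [he', hk']
  exact this

end SepAux

/-- **Lemma 3.1 (separation).** For every `x ∈ L⁰(X)` with `x ≠ 0` a.e. there exists
`y ∈ L⁰(Y)` with `⟨x,y⟩ ≠ 0` a.e., and symmetrically for `y ∈ L⁰(Y)`. -/
theorem separation_L0
    {Ω : Type*} [MeasurableSpace Ω] (μ : Measure Ω) [SigmaFinite μ]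
    {X Y : Type*} [NormedAddCommGroup X] [NormedSpace ℝ X] [CompleteSpace X]
    [NormedAddCommGroup Y] [NormedSpace ℝ Y] [CompleteSpace Y]
    (B : X →ₗ[ℝ] Y →ₗ[ℝ] ℝ)
    (hB : ∀ (x : X) (y : Y), |B x y| ≤ ‖x‖ * ‖y‖)
    (hsepX : ∀ x : X, x ≠ 0 → ∃ y : Y, B x y ≠ 0)
    (hsepY : ∀ y : Y, y ≠ 0 → ∃ x : X, B x y ≠ 0)
    (hballX : @IsClosed X (weakTopol B) {x : X | ‖x‖ ≤ 1})
    (hballY : @IsClosed Y (weakTopol B.flip) {y : Y | ‖y‖ ≤ 1}) :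
    (∀ x : Ω → X, AEStronglyMeasurable x μ → (∀ᵐ ω ∂μ, x ω ≠ 0) →
      ∃ y : Ω → Y, AEStronglyMeasurable y μ ∧ ∀ᵐ ω ∂μ, B (x ω) (y ω) ≠ 0) ∧
    (∀ y : Ω → Y, AEStronglyMeasurable y μ → (∀ᵐ ω ∂μ, y ω ≠ 0) →
      ∃ x : Ω → X, AEStronglyMeasurable x μ ∧ ∀ᵐ ω ∂μ, B (x ω) (y ω) ≠ 0) := by
  constructor
  · exact fun x hx hx0 => sep_aux μ B hB hsepX x hx hx0
  · intro y hy hy0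
    obtain ⟨x, hxm, hxne⟩ := sep_aux μ B.flip
      (fun a b => by simpa [mul_comm] using hB b a)
      (fun a ha => hsepY a ha) y hy hy0
    exact ⟨x, hxm, by simpa using hxne⟩
end
end

section
/- Let (Ω, 𝓕, μ) be a σ-finite measure space, I a nonempty set, and (fᵢ)_{i∈I} a family of measurable functions Ω → [−∞,∞]. Then there exists a measurable function g : Ω → [−∞,∞] which is a least upper bound of the family with respect to the a.e. order: fᵢ ≤ g μ-a.e. for every i ∈ I, and for every measurable h : Ω → [−∞,∞] with fᵢ ≤ h μ-a.e. for every i ∈ I one has g ≤ h μ-a.e. (In other words, every nonempty subset of the space L̄⁰ of measurable [−∞,∞]-valued functions modulo a.e. equality has a least upper bound, the essential supremum, with respect to the a.e. order.) -/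
open MeasureTheory Filter Set Function Topology

noncomputable section

/-- A bounded strictly monotone continuous "gauge" `EReal → ℝ`. -/
def erho : EReal → ℝ := fun x => (ENNReal.orderIsoUnitIntervalBirational (EReal.exp x) : ℝ)

lemma erho_continuous : Continuous erho :=
  continuous_subtype_val.comp
    (ENNReal.orderIsoUnitIntervalBirational.toHomeomorph.continuous.comp ENNReal.continuous_exp)

lemma erho_strictMono : StrictMono erho := fun a b h =>
  Subtype.coe_lt_coe.2
    (ENNReal.orderIsoUnitIntervalBirational.strictMono (EReal.exp_strictMono h))

lemma erho_mem (x : EReal) : erho x ∈ Set.Icc (0:ℝ) 1 :=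
  (ENNReal.orderIsoUnitIntervalBirational (EReal.exp x)).2

lemma erho_norm_le (x : EReal) : ‖erho x‖ ≤ 1 := by
  have h := erho_mem x
  rw [Real.norm_eq_abs, abs_le]
  exact ⟨by linarith [h.1], h.2⟩

/-- **Essential supremum.** Every nonempty family of measurable `[-∞,∞]`-valued
functions on a σ-finite measure space has a measurable a.e. least upper bound. -/
theorem exists_ae_least_upper_bound
    {Ω : Type*} [MeasurableSpace Ω] (μ : Measure Ω) [SigmaFinite μ]
    {I : Type*} [Nonempty I] (f : I → Ω → EReal) (hf : ∀ i, Measurable (f i)) :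
    ∃ g : Ω → EReal, Measurable g ∧ (∀ i, ∀ᵐ ω ∂μ, f i ω ≤ g ω) ∧
      ∀ h : Ω → EReal, Measurable h → (∀ i, ∀ᵐ ω ∂μ, f i ω ≤ h ω) →
        ∀ᵐ ω ∂μ, g ω ≤ h ω := by
  classical
  obtain ⟨ν, hνfin, hμν, hνμ⟩ := exists_isFiniteMeasure_absolutelyContinuous μ
  -- finite suprema
  set u : Finset I → Ω → EReal := fun s ω => ⨆ i ∈ (s : Set I), f i ω with hu
  have humeas : ∀ s, Measurable (u s) := fun s =>
    Measurable.biSup _ s.countable_toSet (fun i _ => hf i)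
  have humono : ∀ {s t : Finset I}, s ⊆ t → ∀ ω, u s ω ≤ u t ω := by
    intro s t hst ω
    exact biSup_mono (fun i hi => hst hi)
  -- integrability
  have hint : ∀ s, Integrable (fun ω => erho (u s ω)) ν := by
    intro s
    refine ⟨(erho_continuous.measurable.comp (humeas s)).aestronglyMeasurable, ?_⟩
    exact HasFiniteIntegral.of_bounded (C := 1)
      (Filter.Eventually.of_forall fun ω => erho_norm_le _)
  set D : Finset I → ℝ := fun s => ∫ ω, erho (u s ω) ∂ν with hD
  have hDmono : ∀ {s t : Finset I}, s ⊆ t → D s ≤ D t := by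
    intro s t hst
    exact integral_mono (hint s) (hint t)
      (fun ω => (erho_strictMono.monotone (humono hst ω)))
  have hbdd : BddAbove (Set.range D) := by
    refine ⟨(ν Set.univ).toReal, ?_⟩
    rintro _ ⟨s, rfl⟩
    calc D s ≤ ∫ _, (1:ℝ) ∂ν := by
          refine integral_mono (hint s) (integrable_const _) (fun ω => (erho_mem _).2)
      _ = (ν Set.univ).toReal := by simp [measureReal_def]
  set M : ℝ := sSup (Set.range D) with hM
  have hDleM : ∀ s, D s ≤ M := fun s => le_csSup hbdd ⟨s, rfl⟩
  -- choose approximating sequence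
  have hex : ∀ n : ℕ, ∃ s : Finset I, M - 1 / (n + 1) < D s := by
    intro n
    have : M - 1 / (n + 1) < M := by
      have : (0:ℝ) < 1 / (n + 1) := by positivity
      linarith
    obtain ⟨_, ⟨s, rfl⟩, hs⟩ := exists_lt_of_lt_csSup (Set.range_nonempty D) this
    exact ⟨s, hs⟩
  choose σ hσ using hex
  set t : ℕ → Finset I := fun n => (Finset.range (n + 1)).sup σ with ht
  have htmono : Monotone t := fun m n hmn =>
    Finset.sup_mono (Finset.range_subset_range.2 (by omega))
  have hσt : ∀ n, σ n ⊆ t n := fun n =>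
    Finset.le_sup (Finset.mem_range.2 (Nat.lt_succ_self n))
  set g : Ω → EReal := fun ω => ⨆ n, u (t n) ω with hg
  have hgmeas : Measurable g := Measurable.iSup fun n => humeas (t n)
  -- convergence of the chosen sequence
  have hconv : ∀ (v : ℕ → Ω → EReal) (w : Ω → EReal), (∀ n, Measurable (v n)) →
      (∀ ω, Monotone (fun n => v n ω)) → (∀ ω, w ω = ⨆ n, v n ω) →
      Tendsto (fun n => ∫ ω, erho (v n ω) ∂ν) atTop (𝓝 (∫ ω, erho (w ω) ∂ν)) := by
    intro v w hvmeas hvmono hw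
    refine tendsto_integral_of_dominated_convergence (fun _ => (1:ℝ))
      (fun n => (erho_continuous.measurable.comp (hvmeas n)).aestronglyMeasurable)
      (integrable_const _)
      (fun n => Filter.Eventually.of_forall fun ω => erho_norm_le _)
      (Filter.Eventually.of_forall fun ω => ?_)
    rw [hw ω]
    exact (erho_continuous.tendsto _).comp (tendsto_atTop_iSup (hvmono ω))
  have hgM : ∫ ω, erho (g ω) ∂ν = M := by
    have h1 : Tendsto (fun n => D (t n)) atTop (𝓝 (∫ ω, erho (g ω) ∂ν)) :=
      hconv (fun n => u (t n)) g (fun n => humeas (t n))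
        (fun ω m n hmn => humono (htmono hmn) ω) (fun ω => rfl)
    have h2 : Tendsto (fun n => D (t n)) atTop (𝓝 M) := by
      have hlow : ∀ n : ℕ, M - 1 / (n + 1) ≤ D (t n) := fun n =>
        le_trans (hσ n).le (hDmono (hσt n))
      have hl : Tendsto (fun n : ℕ => M - 1 / (n + 1 : ℝ)) atTop (𝓝 M) := by
        have := (tendsto_one_div_add_atTop_nhds_zero_nat :
          Tendsto (fun n : ℕ => 1 / ((n : ℝ) + 1)) atTop (𝓝 0))
        simpa using (tendsto_const_nhds (x := M)).sub this
      exact tendsto_of_tendsto_of_tendsto_of_le_of_le hl tendsto_const_nhds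
        hlow (fun n => hDleM _)
    exact tendsto_nhds_unique h1 h2
  refine ⟨g, hgmeas, ?_, ?_⟩
  · -- upper bound
    intro i
    set v : Ω → EReal := fun ω => ⨆ n, u (insert i (t n)) ω with hv
    have hvmeas : Measurable v := Measurable.iSup fun n => humeas _
    have hgv : ∀ ω, g ω ≤ v ω := fun ω =>
      iSup_mono fun n => humono (Finset.subset_insert _ _) ω
    have hvint : Integrable (fun ω => erho (v ω)) ν :=
      ⟨(erho_continuous.measurable.comp hvmeas).aestronglyMeasurable,
        HasFiniteIntegral.of_bounded (C := 1)
          (Filter.Eventually.of_forall fun ω => erho_norm_le _)⟩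
    have hgint : Integrable (fun ω => erho (g ω)) ν :=
      ⟨(erho_continuous.measurable.comp hgmeas).aestronglyMeasurable,
        HasFiniteIntegral.of_bounded (C := 1)
          (Filter.Eventually.of_forall fun ω => erho_norm_le _)⟩
    have hconv' : Tendsto (fun n => D (insert i (t n))) atTop (𝓝 (∫ ω, erho (v ω) ∂ν)) :=
      hconv (fun n => u (insert i (t n))) v (fun n => humeas _)
        (fun ω m n hmn => humono (Finset.insert_subset_insert _ (htmono hmn)) ω)
        (fun ω => rfl)
    have hvM : ∫ ω, erho (v ω) ∂ν ≤ M :=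
      le_of_tendsto hconv' (Filter.Eventually.of_forall fun n => hDleM _)
    -- equality a.e.
    have hzero : ∫ ω, (erho (v ω) - erho (g ω)) ∂ν = 0 := by
      rw [integral_sub hvint hgint]
      have h1 : ∫ ω, erho (v ω) ∂ν - ∫ ω, erho (g ω) ∂ν ≤ 0 := by
        rw [hgM]; linarith
      have h2 : (0:ℝ) ≤ ∫ ω, erho (v ω) ∂ν - ∫ ω, erho (g ω) ∂ν := by
        have := integral_mono hgint hvint
          (fun ω => erho_strictMono.monotone (hgv ω))
        linarith
      linarith
    have hae : ∀ᵐ ω ∂ν, erho (v ω) - erho (g ω) = 0 := by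
      have := (integral_eq_zero_iff_of_nonneg_ae
        (Filter.Eventually.of_forall fun ω => by
          have := erho_strictMono.monotone (hgv ω)
          show (0:ℝ) ≤ erho (v ω) - erho (g ω)
          linarith)
        (hvint.sub hgint)).1 hzero
      filter_upwards [this] with ω hω
      simpa using hω
    have haeν : ∀ᵐ ω ∂ν, f i ω ≤ g ω := by
      filter_upwards [hae] with ω hω
      have hvg : v ω = g ω := by
        have : erho (v ω) = erho (g ω) := by linarith
        exact erho_strictMono.injective this
      rw [← hvg]
      calc f i ω ≤ u (insert i (t 0)) ω := by
            exact le_biSup (f := fun j => f j ω) (by simp : i ∈ (↑(insert i (t 0)) : Set I))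
        _ ≤ v ω := le_iSup (fun n => u (insert i (t n)) ω) 0
    exact hμν.ae_le haeν
  · -- least upper bound
    intro h hmeas hub
    have : ∀ᵐ ω ∂μ, ∀ n : ℕ, ∀ i ∈ t n, f i ω ≤ h ω := by
      rw [ae_all_iff]
      intro n
      rw [Filter.eventually_all_finset]
      intro i _
      exact hub i
    filter_upwards [this] with ω hω
    refine iSup_le fun n => ?_
    refine iSup_le fun i => iSup_le fun hi => hω n i hi
end
end

section
/- Every basic stable neighborhood of any x ∈ L⁰(X) contains a step function: for every x ∈ L⁰(X), every measurable r : Ω → (0,∞), every measurable n : Ω → ℕ and every sequence (yₘ)_{m∈ℕ} in L⁰(Y), there exists x̃ ∈ L⁰ₛ(X) such that for μ-a.e. ω one has |⟨x̃(ω) − x(ω), yₘ(ω)⟩| ≤ r(ω) for all natural numbers 1 ≤ m ≤ n(ω); that is, V(x; r, n, (yₘ)) ∩ L⁰ₛ(X) ≠ ∅. -/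
open MeasureTheory Filter Set Function Topology

noncomputable section

/-- **Nonemptiness of `V ∩ L⁰ₛ(X)`.** Every basic stable neighborhood of every
`x ∈ L⁰(X)` contains a step function. -/
theorem nbhd_contains_step
    {Ω : Type*} [MeasurableSpace Ω] (μ : Measure Ω) [SigmaFinite μ]
    {X Y : Type*} [NormedAddCommGroup X] [NormedSpace ℝ X] [CompleteSpace X]
    [NormedAddCommGroup Y] [NormedSpace ℝ Y] [CompleteSpace Y]
    (B : X →ₗ[ℝ] Y →ₗ[ℝ] ℝ)
    (hB : ∀ (x : X) (y : Y), |B x y| ≤ ‖x‖ * ‖y‖)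
    (x : Ω → X) (hx : AEStronglyMeasurable x μ)
    (r : Ω → ℝ) (hr : Measurable r) (hrpos : ∀ ω, 0 < r ω)
    (n : Ω → ℕ) (hn : Measurable n)
    (ys : ℕ → Ω → Y) (hys : ∀ m, AEStronglyMeasurable (ys m) μ) :
    ∃ xt : Ω → X, IsStep μ xt ∧
      ∀ᵐ ω ∂μ, ∀ m : ℕ, 1 ≤ m → m ≤ n ω → |B (xt ω - x ω) (ys m ω)| ≤ r ω := by
  classical
  -- measurable versions
  set x' : Ω → X := hx.mk x with hx'def
  have hx'meas : StronglyMeasurable x' := hx.stronglyMeasurable_mk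
  have hxx' : x =ᵐ[μ] x' := hx.ae_eq_mk
  set ys' : ℕ → Ω → Y := fun m => (hys m).mk (ys m) with hys'def
  have hys'meas : ∀ m, StronglyMeasurable (ys' m) := fun m => (hys m).stronglyMeasurable_mk
  have hysys' : ∀ m, ys m =ᵐ[μ] ys' m := fun m => (hys m).ae_eq_mk
  -- B is continuous
  have hB' : ∀ (a : X) (b : Y), ‖B a b‖ ≤ 1 * ‖a‖ * ‖b‖ := fun a b => by
    simpa [Real.norm_eq_abs] using hB a b
  let B' : X →L[ℝ] Y →L[ℝ] ℝ := LinearMap.mkContinuous₂ B 1 hB'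
  have hBcont : Continuous fun p : X × Y => B p.1 p.2 := by
    have : Continuous fun p : X × Y => B' p.1 p.2 := B'.isBoundedBilinearMap.continuous
    exact this
  -- a countable dense sequence for the (separable) range of x'
  obtain ⟨c, hc_count, hc_sub⟩ := hx'meas.isSeparable_range
  have hc'_count : (insert (0 : X) c).Countable := hc_count.insert 0
  obtain ⟨d, hd⟩ := Set.Countable.exists_eq_range hc'_count ⟨0, Set.mem_insert _ _⟩
  have hrange : ∀ ω, x' ω ∈ closure (Set.range d) := by
    intro ω
    rw [← hd]
    exact closure_mono (Set.subset_insert _ _) (hc_sub ⟨ω, rfl⟩)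
  -- the covering sets
  set S : ℕ → Set Ω :=
    fun i => {ω | ∀ m : ℕ, 1 ≤ m → m ≤ n ω → |B (d i - x' ω) (ys' m ω)| ≤ r ω} with hSdef
  have hSmeas : ∀ i, MeasurableSet (S i) := by
    intro i
    have : S i = ⋂ m : ℕ, {ω | 1 ≤ m → m ≤ n ω → |B (d i - x' ω) (ys' m ω)| ≤ r ω} := by
      ext ω; simp [hSdef, Set.mem_iInter]
    rw [this]
    refine MeasurableSet.iInter fun m => ?_
    by_cases h1 : 1 ≤ m
    · have hmeasf : Measurable fun ω => |B (d i - x' ω) (ys' m ω)| := by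
        have hsm : StronglyMeasurable fun ω => B (d i - x' ω) (ys' m ω) :=
          hBcont.comp_stronglyMeasurable
            ((stronglyMeasurable_const.sub hx'meas).prodMk (hys'meas m))
        exact hsm.measurable.abs
      have hset : {ω | 1 ≤ m → m ≤ n ω → |B (d i - x' ω) (ys' m ω)| ≤ r ω}
          = {ω | m ≤ n ω}ᶜ ∪ {ω | |B (d i - x' ω) (ys' m ω)| ≤ r ω} := by
        ext ω; simp [h1, imp_iff_not_or]
      rw [hset]
      exact ((hn measurableSet_Ici.compl).union (measurableSet_le hmeasf hr))
    · have hset : {ω | 1 ≤ m → m ≤ n ω → |B (d i - x' ω) (ys' m ω)| ≤ r ω} = Set.univ := by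
        ext ω; simp [h1]
      rw [hset]; exact MeasurableSet.univ
  -- the S i cover Ω
  have hScover : ∀ ω, ∃ i, ω ∈ S i := by
    intro ω
    set s : ℝ := ∑ m ∈ Finset.Icc 1 (n ω), ‖ys' m ω‖ with hsdef
    have hs0 : 0 ≤ s := Finset.sum_nonneg fun m _ => norm_nonneg _
    have hspos : (0 : ℝ) < 1 + s := by linarith
    set δ : ℝ := r ω / (1 + s) with hδdef
    have hδpos : 0 < δ := div_pos (hrpos ω) hspos
    obtain ⟨b, hb_mem, hb_dist⟩ := Metric.mem_closure_iff.mp (hrange ω) δ hδpos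
    obtain ⟨i, rfl⟩ := hb_mem
    refine ⟨i, fun m h1 h2 => ?_⟩
    have hy_le : ‖ys' m ω‖ ≤ s :=
      Finset.single_le_sum (f := fun m => ‖ys' m ω‖) (fun k _ => norm_nonneg _)
        (Finset.mem_Icc.mpr ⟨h1, h2⟩)
    calc |B (d i - x' ω) (ys' m ω)| ≤ ‖d i - x' ω‖ * ‖ys' m ω‖ := hB _ _
      _ ≤ δ * (1 + s) := by
          apply mul_le_mul _ (by linarith) (norm_nonneg _) hδpos.le
          rw [← dist_eq_norm]
          exact (dist_comm (x' ω) (d i) ▸ hb_dist).le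
      _ = r ω := div_mul_cancel₀ _ hspos.ne'
  -- disjointify
  set A : ℕ → Set Ω := disjointed S with hAdef
  have hAmeas : ∀ k, MeasurableSet (A k) := MeasurableSet.disjointed hSmeas
  have hAdisj : Pairwise (Disjoint on A) := disjoint_disjointed S
  have hAunion : (⋃ k, A k) = Set.univ := by
    rw [hAdef, iUnion_disjointed]
    exact Set.eq_univ_of_forall fun ω => Set.mem_iUnion.mpr (hScover ω)
  have hAcover : ∀ ω, ∃ k, ω ∈ A k := fun ω => by
    have := Set.eq_univ_iff_forall.mp hAunion ω
    exact Set.mem_iUnion.mp this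
  -- the step function
  set xt : Ω → X := fun ω => d (Nat.find (hAcover ω)) with hxtdef
  have hkey : ∀ ω k, ω ∈ A k → Nat.find (hAcover ω) = k := by
    intro ω k hk
    by_contra hne
    exact Set.disjoint_left.mp (hAdisj hne) (Nat.find_spec (hAcover ω)) hk
  refine ⟨xt, ⟨d, A, hAmeas, hAdisj, hAunion, Filter.Eventually.of_forall fun ω k hk => by
    rw [hxtdef]; simp only; rw [hkey ω k hk]⟩, ?_⟩
  have hall : ∀ᵐ ω ∂μ, x ω = x' ω ∧ ∀ m, ys m ω = ys' m ω := by
    filter_upwards [hxx', ae_all_iff.mpr hysys'] with ω h1 h2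
    exact ⟨h1, h2⟩
  filter_upwards [hall] with ω hω m h1 h2
  obtain ⟨hωx, hωy⟩ := hω
  have hmem : ω ∈ S (Nat.find (hAcover ω)) :=
    disjointed_subset S (Nat.find (hAcover ω)) (Nat.find_spec (hAcover ω))
  have := hmem m h1 h2
  rw [hxtdef, hωx, hωy m]
  exact this
end
end

section
/- Let L² = L²((0,1], ℬ, λ). For a countably-valued strongly measurable x̃ : (0,1] → L², x̃ = Σₖ xₖ 1_{Aₖ}, let id_s(x̃) denote the measurable real-valued function on (0,1] that agrees λ-a.e. on each Aₖ with (a representative of) xₖ. Then for every measurable r : (0,1] → (0,∞), every measurable n : (0,1] → ℕ, every sequence (yₘ)_{m∈ℕ} of strongly measurable functions (0,1] → L², and every real constant c > 0, there exists a countably-valued strongly measurable x̃ : (0,1] → L² such that for λ-a.e. ω one has |⟨x̃(ω), yₘ(ω)⟩_{L²}| ≤ r(ω) for all 1 ≤ m ≤ n(ω), and id_s(x̃)(ω) ≤ −c for λ-a.e. ω. (This shows that at the point 0 the identity map id : L² → L̄⁰ fails the σ_s-lower semi-continuity formula: the supremum over basic stable neighborhoods of 0 of the infimum of id_s over step functions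 in the neighborhood equals −∞, not id(0) = 0.) -/
open MeasureTheory Filter Set Function Topology

noncomputable section

/-- **Failure of σ_s-lower semi-continuity of the identity on `L²` (Remark 2.5).**
Every basic stable neighborhood of `0 ∈ L⁰(L²)` contains a step function
`xt = Σₖ xₖ 1_{Aₖ}` whose diagonal `id_s(xt)` is `≤ -c` a.e. (for any prescribed
constant `c > 0`). -/
theorem L2_identity_not_sigmaS_lsc
    (r : ℝ → ℝ) (hr : Measurable r) (hrpos : ∀ ω, 0 < r ω)
    (n : ℝ → ℕ) (hn : Measurable n)
    (ys : ℕ → ℝ → Lp ℝ 2 (volume.restrict (Set.Ioc (0:ℝ) 1)))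
    (hys : ∀ m, AEStronglyMeasurable (ys m) (volume.restrict (Set.Ioc (0:ℝ) 1)))
    (c : ℝ) (hc : 0 < c) :
    ∃ (xt : ℝ → Lp ℝ 2 (volume.restrict (Set.Ioc (0:ℝ) 1)))
      (xs : ℕ → Lp ℝ 2 (volume.restrict (Set.Ioc (0:ℝ) 1))) (A : ℕ → Set ℝ),
      (∀ k, MeasurableSet (A k)) ∧ Pairwise (Disjoint on A) ∧
      (⋃ k, A k) = Set.univ ∧
      (∀ᵐ ω ∂(volume.restrict (Set.Ioc (0:ℝ) 1)), ∀ k, ω ∈ A k → xt ω = xs k) ∧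
      (∀ᵐ ω ∂(volume.restrict (Set.Ioc (0:ℝ) 1)), ∀ m : ℕ, 1 ≤ m → m ≤ n ω →
        |(inner ℝ (xt ω) (ys m ω) : ℝ)| ≤ r ω) ∧
      (∀ k, ∀ᵐ ω ∂((volume.restrict (Set.Ioc (0:ℝ) 1)).restrict (A k)),
        ((xs k : ℝ → ℝ) ω : ℝ) ≤ -c) := by

  classical
  -- strongly measurable versions of the ys
  obtain ⟨ys', hys'sm, hys'ae⟩ :
      ∃ ys' : ℕ → ℝ → Lp ℝ 2 (volume.restrict (Set.Ioc (0:ℝ) 1)),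
        (∀ m, StronglyMeasurable (ys' m)) ∧
        (∀ᵐ ω ∂(volume.restrict (Set.Ioc (0:ℝ) 1)), ∀ m, ys m ω = ys' m ω) := by
    refine ⟨fun m => (hys m).mk (ys m), fun m => (hys m).stronglyMeasurable_mk, ?_⟩
    rw [MeasureTheory.ae_all_iff]; exact fun m => (hys m).ae_eq_mk
  -- the bound function g
  obtain ⟨g, hgmeas, hgnonneg, hgbound⟩ :
      ∃ g : ℝ → ℝ, Measurable g ∧ (∀ ω, 0 ≤ g ω) ∧
        ∀ ω m, 1 ≤ m → m ≤ n ω → ‖ys' m ω‖ ≤ g ω := by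
    have hGmeas : ∀ j : ℕ, Measurable fun ω => ∑ m ∈ Finset.Icc 1 j, ‖ys' m ω‖ :=
      fun j => Finset.measurable_sum _ (fun m _ => (hys'sm m).norm.measurable)
    refine ⟨fun ω => ∑ m ∈ Finset.Icc 1 (n ω), ‖ys' m ω‖, ?_, ?_, ?_⟩
    · intro s hs
      have hpre : (fun ω => ∑ m ∈ Finset.Icc 1 (n ω), ‖ys' m ω‖) ⁻¹' s
          = ⋃ j : ℕ, {ω | n ω = j} ∩ (fun ω => ∑ m ∈ Finset.Icc 1 j, ‖ys' m ω‖) ⁻¹' s := by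
        ext ω
        simp only [Set.mem_preimage, Set.mem_iUnion, Set.mem_inter_iff, Set.mem_setOf_eq]
        constructor
        · exact fun h => ⟨n ω, rfl, h⟩
        · rintro ⟨j, hj, h⟩
          rw [hj]
          exact h
      rw [hpre]
      exact MeasurableSet.iUnion fun j =>
        (hn (measurableSet_singleton j)).inter (hGmeas j hs)
    · exact fun ω => Finset.sum_nonneg fun m _ => norm_nonneg _
    · intro ω m hm1 hmn
      exact Finset.single_le_sum (f := fun m => ‖ys' m ω‖)
        (fun i _ => norm_nonneg _) (Finset.mem_Icc.mpr ⟨hm1, hmn⟩)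
  -- t and its floor J
  set t : ℝ → ℝ := fun ω => c * g ω / r ω with htdef
  have htmeas : Measurable t := ((measurable_const.mul hgmeas).div hr)
  set J : ℝ → ℕ := fun ω => ⌊t ω⌋₊ with hJdef
  have hJmeas : Measurable J := Nat.measurable_floor.comp htmeas
  have ht_lt : ∀ ω, t ω < (J ω : ℝ) + 1 := fun ω => Nat.lt_floor_add_one (t ω)
  -- widths
  set w : ℕ → ℝ := fun j => (1 / ((j:ℝ) + 1)) ^ 2 with hwdef
  have hwpos : ∀ j, 0 < w j := fun j => by positivity
  -- the partition pieces
  set e : ℕ ≃ ℕ × ℕ := (Denumerable.eqv (ℕ × ℕ)).symm with hedef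
  set A' : ℕ × ℕ → Set ℝ := fun p =>
    {ω | J ω = p.1} ∩ Set.Ioc ((p.2 : ℝ) * w p.1) (((p.2 : ℝ) + 1) * w p.1)
      ∩ Set.Ioc (0:ℝ) 1 with hA'def
  have hA'meas : ∀ p, MeasurableSet (A' p) := fun p =>
    ((hJmeas (MeasurableSet.singleton p.1)).inter measurableSet_Ioc).inter measurableSet_Ioc
  set A : ℕ → Set ℝ := fun k => match k with
    | 0 => (Set.Ioc (0:ℝ) 1)ᶜ
    | Nat.succ k' => A' (e k') with hAdef
  have hAmeas : ∀ k, MeasurableSet (A k) := by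
    intro k; match k with
    | 0 => exact measurableSet_Ioc.compl
    | Nat.succ k' => exact hA'meas (e k')
  have hA'disj : ∀ p q, p ≠ q → Disjoint (A' p) (A' q) := by
    intro p q hpq
    rw [Set.disjoint_left]
    rintro ω ⟨⟨hJp, hIp⟩, -⟩ ⟨⟨hJq, hIq⟩, -⟩
    have h1 : p.1 = q.1 := hJp.symm.trans hJq
    have h2 : p.2 ≠ q.2 := fun h2 => hpq (Prod.ext h1 h2)
    rcases lt_or_gt_of_ne h2 with hlt | hlt
    · have h3 : ((p.2 : ℝ) + 1) * w p.1 ≤ (q.2 : ℝ) * w q.1 := by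
        rw [h1]; exact mul_le_mul_of_nonneg_right (by exact_mod_cast hlt) (hwpos q.1).le
      exact absurd hIp.2 (not_le.mpr (lt_of_le_of_lt h3 hIq.1))
    · have h3 : ((q.2 : ℝ) + 1) * w q.1 ≤ (p.2 : ℝ) * w p.1 := by
        rw [← h1]; exact mul_le_mul_of_nonneg_right (by exact_mod_cast hlt) (hwpos p.1).le
      exact absurd hIq.2 (not_le.mpr (lt_of_le_of_lt h3 hIp.1))
  have hA'sub : ∀ p, A' p ⊆ Set.Ioc (0:ℝ) 1 := fun p => Set.inter_subset_right
  have hAdisj : Pairwise (Disjoint on A) := by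
    intro k l hkl
    match k, l with
    | 0, 0 => exact absurd rfl hkl
    | 0, Nat.succ l' =>
      exact Set.disjoint_left.mpr fun ω hω hω' => hω (hA'sub (e l') hω')
    | Nat.succ k', 0 =>
      exact Set.disjoint_right.mpr fun ω hω hω' => hω (hA'sub (e k') hω')
    | Nat.succ k', Nat.succ l' =>
      exact hA'disj (e k') (e l') (fun h => hkl (by simp [e.injective h]))
  have hAcov : ∀ ω, ∃ k, ω ∈ A k := by
    intro ω
    by_cases hω : ω ∈ Set.Ioc (0:ℝ) 1
    · have hwj := hwpos (J ω)
      have hdivpos : 0 < ω / w (J ω) := div_pos hω.1 hwj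
      set N : ℕ := ⌈ω / w (J ω)⌉₊ with hN
      have hN1 : 1 ≤ N := Nat.one_le_ceil_iff.mpr hdivpos
      refine ⟨(e.symm (J ω, N - 1)).succ, ?_⟩
      show ω ∈ A' (e (e.symm (J ω, N - 1)))
      rw [e.apply_symm_apply]
      refine ⟨⟨rfl, ?_, ?_⟩, hω⟩
      · have hlt : ((N - 1 : ℕ) : ℝ) < ω / w (J ω) :=
          Nat.lt_ceil.mp (Nat.sub_lt hN1 one_pos)
        exact (lt_div_iff₀ hwj).mp hlt
      · have hcast : ((N - 1 : ℕ) : ℝ) + 1 = (N : ℝ) := by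
          rw [Nat.cast_sub hN1]; push_cast; ring
        rw [hcast]
        exact (div_le_iff₀ hwj).mp (Nat.le_ceil _)
    · exact ⟨0, hω⟩
  have hAunion : (⋃ k, A k) = Set.univ :=
    Set.eq_univ_of_forall fun ω => Set.mem_iUnion.mpr (hAcov ω)
  -- finiteness of the measure of each piece
  have hμfin : ∀ s : Set ℝ, volume.restrict (Set.Ioc (0:ℝ) 1) s ≠ ⊤ := by
    intro s
    have h1 : volume.restrict (Set.Ioc (0:ℝ) 1) s ≤ volume (Set.Ioc (0:ℝ) 1) := by
      calc volume.restrict (Set.Ioc (0:ℝ) 1) s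
            ≤ volume.restrict (Set.Ioc (0:ℝ) 1) Set.univ := measure_mono (Set.subset_univ s)
        _ = volume (Set.Ioc (0:ℝ) 1) := Measure.restrict_apply_univ _
    have h2 : volume (Set.Ioc (0:ℝ) 1) < ⊤ := by
      rw [Real.volume_Ioc]; exact ENNReal.ofReal_lt_top
    exact (lt_of_le_of_lt h1 h2).ne
  -- the values
  set xs : ℕ → Lp ℝ 2 (volume.restrict (Set.Ioc (0:ℝ) 1)) := fun k => match k with
    | 0 => 0
    | Nat.succ k' => indicatorConstLp 2 (hAmeas (Nat.succ k')) (hμfin _) (-c) with hxsdef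
  set xt : ℝ → Lp ℝ 2 (volume.restrict (Set.Ioc (0:ℝ) 1)) :=
    fun ω => xs (hAcov ω).choose with hxtdef
  have hxt : ∀ ω k, ω ∈ A k → xt ω = xs k := by
    intro ω k hk
    have hk' := (hAcov ω).choose_spec
    by_cases h : (hAcov ω).choose = k
    · rw [hxtdef]; exact congrArg xs h
    · exact (Set.disjoint_left.mp (hAdisj h) hk' hk).elim
  -- measure bound on pieces
  have hμA : ∀ k', (volume.restrict (Set.Ioc (0:ℝ) 1) (A (Nat.succ k'))).toReal
      ≤ w (e k').1 := by
    intro k'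
    have h1 : volume.restrict (Set.Ioc (0:ℝ) 1) (A (Nat.succ k'))
        ≤ ENNReal.ofReal (w (e k').1) := by
      calc volume.restrict (Set.Ioc (0:ℝ) 1) (A (Nat.succ k'))
            ≤ volume (A (Nat.succ k')) := Measure.restrict_le_self _
        _ ≤ volume (Set.Ioc (((e k').2 : ℝ) * w (e k').1)
              ((((e k').2 : ℝ) + 1) * w (e k').1)) := by
            apply measure_mono
            intro ω hω
            exact hω.1.2
        _ = ENNReal.ofReal (w (e k').1) := by
            rw [Real.volume_Ioc]; congr 1; ring
    calc (volume.restrict (Set.Ioc (0:ℝ) 1) (A (Nat.succ k'))).toReal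
          ≤ (ENNReal.ofReal (w (e k').1)).toReal :=
          ENNReal.toReal_mono ENNReal.ofReal_ne_top h1
      _ = w (e k').1 := ENNReal.toReal_ofReal (hwpos _).le
  -- norm bound on xs
  have hxsnorm : ∀ k', ‖xs (Nat.succ k')‖ ≤ c * (1 / ((((e k').1 : ℝ)) + 1)) := by
    intro k'
    rw [show xs (Nat.succ k') = indicatorConstLp 2 (hAmeas (Nat.succ k')) (hμfin _) (-c) from rfl]
    rw [norm_indicatorConstLp (by norm_num) (by norm_num)]
    have hp : (ENNReal.toReal 2) = 2 := by norm_num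
    rw [hp, norm_neg, Real.norm_of_nonneg hc.le]
    have h1 : (volume.restrict (Set.Ioc (0:ℝ) 1) (A (Nat.succ k'))).toReal ^ ((1:ℝ)/2)
        ≤ (w (e k').1) ^ ((1:ℝ)/2) :=
      Real.rpow_le_rpow ENNReal.toReal_nonneg (hμA k') (by norm_num)
    have h2 : (w (e k').1) ^ ((1:ℝ)/2) = 1 / (((e k').1 : ℝ) + 1) := by
      show ((1 / (((e k').1 : ℝ) + 1)) ^ 2) ^ ((1:ℝ)/2) = 1 / (((e k').1 : ℝ) + 1)
      rw [← Real.rpow_natCast (1 / (((e k').1 : ℝ) + 1)) 2, ← Real.rpow_mul (by positivity)]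
      norm_num
    calc c * (volume.restrict (Set.Ioc (0:ℝ) 1) (A (Nat.succ k'))).toReal ^ ((1:ℝ)/2)
        ≤ c * (w (e k').1) ^ ((1:ℝ)/2) := mul_le_mul_of_nonneg_left h1 hc.le
      _ = c * (1 / (((e k').1 : ℝ) + 1)) := by rw [h2]
  refine ⟨xt, xs, A, hAmeas, hAdisj, hAunion, ?_, ?_, ?_⟩
  · exact Filter.Eventually.of_forall fun ω k hk => hxt ω k hk
  · -- the inner product bound
    filter_upwards [hys'ae, ae_restrict_mem measurableSet_Ioc] with ω hyω hωIoc
    intro m hm1 hmn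
    obtain ⟨k, hk⟩ := hAcov ω
    match k, hk with
    | 0, hk => exact absurd hωIoc hk
    | Nat.succ k', hk =>
      rw [hxt ω (Nat.succ k') hk, hyω m]
      calc |(inner ℝ (xs (Nat.succ k')) (ys' m ω) : ℝ)|
          ≤ ‖xs (Nat.succ k')‖ * ‖ys' m ω‖ := abs_real_inner_le_norm _ _
        _ ≤ (c * (1 / (((e k').1 : ℝ) + 1))) * g ω :=
            mul_le_mul (hxsnorm k') (hgbound ω m hm1 hmn) (norm_nonneg _) (by positivity)
        _ ≤ r ω := by
            have hJω : J ω = (e k').1 := hk.1.1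
            have htω : t ω < ((e k').1 : ℝ) + 1 := by
              rw [← hJω]; exact ht_lt ω
            have hrω := hrpos ω
            have hlt : c * g ω < (((e k').1 : ℝ) + 1) * r ω := by
              rw [htdef] at htω
              have := (div_lt_iff₀ hrω).mp htω
              linarith
            have hj1 : (0:ℝ) < ((e k').1 : ℝ) + 1 := by positivity
            have : c * (1 / (((e k').1 : ℝ) + 1)) * g ω
                = (c * g ω) / (((e k').1 : ℝ) + 1) := by ring
            rw [this, div_le_iff₀ hj1]
            nlinarith [hrpos ω]
  · -- the key property: xs k ≤ -c a.e. on A k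
    intro k
    match k with
    | 0 =>
      have hz : (volume.restrict (Set.Ioc (0:ℝ) 1)).restrict (A 0) = 0 := by
        rw [Measure.restrict_restrict (hAmeas 0)]
        have he : (A 0) ∩ Set.Ioc (0:ℝ) 1 = ∅ := Set.compl_inter_self _
        rw [he, Measure.restrict_empty]
      rw [hz, ae_zero]
      exact Filter.eventually_bot
    | Nat.succ k' =>
      have hcoe := indicatorConstLp_coeFn (μ := volume.restrict (Set.Ioc (0:ℝ) 1)) (p := 2)
        (hs := hAmeas (Nat.succ k')) (hμs := hμfin (A (Nat.succ k'))) (c := (-c))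
      have hcoe' : ∀ᵐ ω ∂((volume.restrict (Set.Ioc (0:ℝ) 1)).restrict (A (Nat.succ k'))),
          (xs (Nat.succ k') : ℝ → ℝ) ω = (A (Nat.succ k')).indicator (fun _ => -c) ω :=
        ae_restrict_of_ae hcoe
      filter_upwards [hcoe', ae_restrict_mem (hAmeas (Nat.succ k'))] with ω h1 h2
      rw [h1, Set.indicator_of_mem h2]
end
end
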